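/- arXiv:2503.22611 — 7 statements merged into one kernel-verified Lean document; each statement's English description precedes it below -/
import Mathlib

section
/- If the energy forms e in H and ẽ in H̃ are δ-quasi-unitarily equivalent with identification operators J, J', J¹, J'¹, then for every z ∈ ℂ \ (spec Δ ∪ spec Δ̃) one has the resolvent intertwining estimate ‖(Δ̃ − z)⁻¹ J − J (Δ − z)⁻¹‖ ≤ C(z) δ, where C(z) := 4 (1 + |z+1| / d(z, spec Δ ∪ spec Δ̃))² and d denotes the Euclidean distance in ℂ. -/
open scoped ComplexConjugate

noncomputable section

/-- A non-negative self-adjoint operator in a complex Hilbert space `H`, packaged as a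
densely defined symmetric non-negative operator together with its (everywhere defined,
bounded) resolvent `res = (Δ + 1)⁻¹`. -/
structure NonnegOp (H : Type*) [NormedAddCommGroup H] [InnerProductSpace ℂ H]
    [CompleteSpace H] where
  domain : Submodule ℂ H
  dense : Dense (domain : Set H)
  op : domain →ₗ[ℂ] H
  symm : ∀ f g : domain, (inner ℂ (op f) (g : H) : ℂ) = inner ℂ (f : H) (op g)
  nonneg : ∀ f : domain, 0 ≤ (inner ℂ (op f) (f : H) : ℂ).re
  res : H →L[ℂ] H
  res_mem : ∀ u : H, res u ∈ domain
  op_res : ∀ u : H, op ⟨res u, res_mem u⟩ + res u = u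
  res_op : ∀ f : domain, res (op f + (f : H)) = f

/-- `Rz` is the resolvent `(Δ - z)⁻¹` of the operator `T` at the point `z`. -/
structure IsResolventAt {H : Type*} [NormedAddCommGroup H] [InnerProductSpace ℂ H]
    [CompleteSpace H] (T : NonnegOp H) (z : ℂ) (Rz : H →L[ℂ] H) : Prop where
  mem : ∀ u : H, Rz u ∈ T.domain
  right_inv : ∀ u : H, T.op ⟨Rz u, mem u⟩ - z • Rz u = u
  left_inv : ∀ f : T.domain, Rz (T.op f - z • (f : H)) = f

/-- The spectrum of `T`: the set of `z : ℂ` at which no bounded resolvent exists. -/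
def NonnegOp.spec {H : Type*} [NormedAddCommGroup H] [InnerProductSpace ℂ H]
    [CompleteSpace H] (T : NonnegOp H) : Set ℂ :=
  {z | ¬ ∃ Rz : H →L[ℂ] H, IsResolventAt T z Rz}


/-- An energy form in `H` with form domain `D`: a densely defined, closed, non-negative,
hermitian sesquilinear form (conjugate-linear in the first argument). -/
structure EnergyFormOn (H : Type*) [NormedAddCommGroup H] [InnerProductSpace ℂ H]
    [CompleteSpace H] (D : Submodule ℂ H) where
  dense : Dense (D : Set H)
  form : D → D → ℂ
  linear_right : ∀ f : D, IsLinearMap ℂ (form f)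
  conj_symm : ∀ f g : D, form g f = conj (form f g)
  nonneg : ∀ f : D, 0 ≤ (form f f).re
  closed : ∀ f : ℕ → D,
    (∀ ε : ℝ, 0 < ε → ∃ N : ℕ, ∀ p ≥ N, ∀ q ≥ N,
        ‖((f p : H)) - (f q : H)‖ ^ 2 + (form (f p - f q) (f p - f q)).re < ε) →
    ∃ g : D, Filter.Tendsto
        (fun n => ‖((f n : H)) - (g : H)‖ ^ 2 + (form (f n - g) (f n - g)).re)
        Filter.atTop (nhds 0)

/-- The form norm `‖f‖_e = (‖f‖² + e(f,f))^{1/2}`. -/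
def EnergyFormOn.enorm {H : Type*} [NormedAddCommGroup H] [InnerProductSpace ℂ H]
    [CompleteSpace H] {D : Submodule ℂ H} (E : EnergyFormOn H D) (f : D) : ℝ :=
  Real.sqrt (‖(f : H)‖ ^ 2 + (E.form f f).re)

/-- `T` is the non-negative self-adjoint operator associated with the energy form `E`
(first representation theorem). -/
structure IsAssociatedOp {H : Type*} [NormedAddCommGroup H] [InnerProductSpace ℂ H]
    [CompleteSpace H] {D : Submodule ℂ H} (E : EnergyFormOn H D) (T : NonnegOp H) : Prop where
  le : T.domain ≤ D
  compat : ∀ (f : T.domain) (u : D),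
    E.form ⟨(f : H), le f.2⟩ u = (inner ℂ (T.op f) (u : H) : ℂ)


/-- `δ`-quasi-unitary equivalence of the energy forms `E` and `E'` with identification
operators `J`, `J'` (on the Hilbert spaces) and `J1`, `J1'` (on the form domains). -/
structure FormQUE {H H' : Type*} [NormedAddCommGroup H] [InnerProductSpace ℂ H]
    [CompleteSpace H] [NormedAddCommGroup H'] [InnerProductSpace ℂ H'] [CompleteSpace H']
    {D : Submodule ℂ H} {D' : Submodule ℂ H'}
    (E : EnergyFormOn H D) (E' : EnergyFormOn H' D') (δ : ℝ)
    (J : H →L[ℂ] H') (J' : H' →L[ℂ] H)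
    (J1 : D →ₗ[ℂ] D') (J1' : D' →ₗ[ℂ] D) : Prop where
  bounded : ∀ f : H, ‖J f‖ ≤ (1 + δ) * ‖f‖
  almost_adjoint : ∀ (f : H) (u : H'),
    ‖(inner ℂ (J f) u : ℂ) - (inner ℂ f (J' u) : ℂ)‖ ≤ δ * ‖f‖ * ‖u‖
  inv_left : ∀ f : D, ‖(f : H) - J' (J (f : H))‖ ≤ δ * E.enorm f
  inv_right : ∀ u : D', ‖(u : H') - J (J' (u : H'))‖ ≤ δ * E'.enorm u
  compat_left : ∀ f : D, ‖((J1 f : H')) - J (f : H)‖ ≤ δ * E.enorm f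
  compat_right : ∀ u : D', ‖((J1' u : H)) - J' (u : H')‖ ≤ δ * E'.enorm u
  close : ∀ (f : D) (u : D'),
    ‖E'.form (J1 f) u - E.form f (J1' u)‖ ≤ δ * E.enorm f * E'.enorm u


section AuxAlg

open ContinuousLinearMap

variable {H : Type*} [NormedAddCommGroup H] [InnerProductSpace ℂ H] [CompleteSpace H]
  {T : NonnegOp H}

/-- `T.res` is the resolvent of `T` at `-1`. -/
lemma NonnegOp.res_isResolventAt (T : NonnegOp H) : IsResolventAt T (-1) T.res where
  mem := T.res_mem
  right_inv u := by simpa [sub_neg_eq_add] using T.op_res u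
  left_inv f := by simpa [sub_neg_eq_add] using T.res_op f

/-- First resolvent identity, version 1. -/
lemma IsResolventAt.sub_eq₁ {z w : ℂ} {R S : H →L[ℂ] H}
    (hR : IsResolventAt T z R) (hS : IsResolventAt T w S) (u : H) :
    R u - S u = (z - w) • R (S u) := by
  have h2 : T.op ⟨S u, hS.mem u⟩ = u + w • S u := sub_eq_iff_eq_add.mp (hS.right_inv u)
  have h1 := hR.left_inv ⟨S u, hS.mem u⟩
  rw [h2] at h1
  have h3 : u + w • S u - z • S u = u + (w - z) • S u := by module
  rw [h3, map_add, map_smul] at h1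
  have h1' : R u + (w - z) • R (S u) = S u := h1
  rw [eq_sub_of_add_eq h1']; module

/-- First resolvent identity, version 2. -/
lemma IsResolventAt.sub_eq₂ {z w : ℂ} {R S : H →L[ℂ] H}
    (hR : IsResolventAt T z R) (hS : IsResolventAt T w S) (u : H) :
    R u - S u = (z - w) • S (R u) := by
  have h := hS.sub_eq₁ hR u
  have h2 := congrArg (fun t => -t) h
  simp only [neg_sub] at h2
  rw [h2, ← neg_smul, neg_sub]

/-- Uniqueness of the resolvent. -/
lemma IsResolventAt.unique {z : ℂ} {R S : H →L[ℂ] H}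
    (hR : IsResolventAt T z R) (hS : IsResolventAt T z S) : R = S := by
  ext u
  have := hR.sub_eq₁ hS u
  simp only [sub_self, zero_smul] at this
  exact sub_eq_zero.mp this

end AuxAlg
section AuxAlg2

open ContinuousLinearMap

variable {H : Type*} [NormedAddCommGroup H] [InnerProductSpace ℂ H] [CompleteSpace H]
  {T : NonnegOp H}

/-- If `T` has a resolvent at `z + μ⁻¹` (with `μ ≠ 0`), then `μ` is not in the spectrum of
the resolvent `R` of `T` at `z`. -/
lemma IsResolventAt.isUnit_algebraMap_sub {z : ℂ} {R : H →L[ℂ] H}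
    (hR : IsResolventAt T z R) {μ : ℂ} (hμ : μ ≠ 0) {S : H →L[ℂ] H}
    (hS : IsResolventAt T (z + μ⁻¹) S) :
    IsUnit (algebraMap ℂ (H →L[ℂ] H) μ - R) := by
  have hzw : z - (z + μ⁻¹) = -μ⁻¹ := by ring
  have hinj : Function.Injective ((-μ⁻¹ : ℂ) • · : H → H) :=
    smul_right_injective H (by simpa using inv_ne_zero hμ)
  have hRS : ∀ u : H, R (S u) = (-μ) • (R u - S u) := by
    intro u
    apply hinj
    show (-μ⁻¹ : ℂ) • R (S u) = (-μ⁻¹ : ℂ) • ((-μ) • (R u - S u))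
    have h := hR.sub_eq₁ hS u
    rw [hzw] at h
    rw [← h, smul_smul, show (-μ⁻¹) * (-μ) = (1:ℂ) by field_simp, one_smul]
  have hSR : ∀ u : H, S (R u) = (-μ) • (R u - S u) := by
    intro u
    apply hinj
    show (-μ⁻¹ : ℂ) • S (R u) = (-μ⁻¹ : ℂ) • ((-μ) • (R u - S u))
    have h := hR.sub_eq₂ hS u
    rw [hzw] at h
    rw [← h, smul_smul, show (-μ⁻¹) * (-μ) = (1:ℂ) by field_simp, one_smul]
  refine ⟨⟨algebraMap ℂ (H →L[ℂ] H) μ - R, μ⁻¹ • 1 + (μ⁻¹ * μ⁻¹) • S, ?_, ?_⟩, rfl⟩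
  · ext u
    simp only [mul_apply_eq_comp, add_apply, smul_apply, one_apply_eq_self, map_add, map_smul,
      Algebra.algebraMap_eq_smul_one, sub_apply, map_sub]
    rw [hRS]
    match_scalars <;> field_simp <;> ring
  · ext u
    simp only [mul_apply_eq_comp, add_apply, smul_apply, one_apply_eq_self, map_add, map_smul,
      Algebra.algebraMap_eq_smul_one, sub_apply, map_sub]
    rw [hSR]
    match_scalars <;> field_simp <;> ring

/-- Neumann series: points near a point with a resolvent also have a resolvent. -/
lemma IsResolventAt.exists_near {z : ℂ} {R : H →L[ℂ] H}
    (hR : IsResolventAt T z R) {w : ℂ} (h : ‖w - z‖ * ‖R‖ < 1) :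
    ∃ S : H →L[ℂ] H, IsResolventAt T w S := by
  set t : H →L[ℂ] H := (w - z) • R with ht_def
  have ht : ‖t‖ < 1 := by rw [ht_def, norm_smul]; exact h
  set uu : (H →L[ℂ] H)ˣ := Units.oneSub t ht with huu
  have hval : (uu : H →L[ℂ] H) = 1 - t := rfl
  have hc : Commute R (uu : H →L[ℂ] H) := by
    rw [hval]
    exact (Commute.one_right R).sub_right ((Commute.refl R).smul_right (w - z))
  have hcomm : Commute R ((uu⁻¹ : (H →L[ℂ] H)ˣ) : H →L[ℂ] H) := hc.units_inv_right
  set V : H →L[ℂ] H := ((uu⁻¹ : (H →L[ℂ] H)ˣ) : H →L[ℂ] H) with hV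
  have hRV : ∀ x, R (V x) = V (R x) := fun x => by
    have := congrArg (fun (A : H →L[ℂ] H) => A x) hcomm.eq
    simpa [mul_apply_eq_comp] using this
  refine ⟨R * V, ?_, ?_, ?_⟩
  · intro x; exact hR.mem (V x)
  · intro x
    have h1 : T.op ⟨R (V x), hR.mem (V x)⟩ = V x + z • R (V x) :=
      sub_eq_iff_eq_add.mp (hR.right_inv (V x))
    have h2 : (uu : H →L[ℂ] H) (V x) = x := by
      rw [← mul_apply_eq_comp, uu.mul_inv, one_apply_eq_self]
    have h3 : V x - (w - z) • R (V x) = x := by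
      have h4 : (uu : H →L[ℂ] H) (V x) = V x - (w - z) • R (V x) := by
        rw [hval]; simp [t, sub_apply, smul_apply]
      rw [← h4, ← mul_apply_eq_comp, uu.mul_inv, one_apply_eq_self]
    calc T.op ⟨(R * V) x, _⟩ - w • (R * V) x
        = (V x + z • R (V x)) - w • R (V x) := by rw [← h1]; rfl
      _ = V x - (w - z) • R (V x) := by module
      _ = x := h3
  · intro f
    have h1 : (R * V) (T.op f - w • (f : H)) = V (R (T.op f - z • (f : H) - (w - z) • (f : H))) := by
      rw [mul_apply_eq_comp, hRV]
      congr 1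
      congr 1
      module
    rw [h1, map_sub, map_smul, hR.left_inv f]
    have h2 : (f : H) - (w - z) • R (f : H) = (uu : H →L[ℂ] H) (f : H) := by
      rw [hval]; simp [t, sub_apply, smul_apply]
    rw [h2, ← mul_apply_eq_comp, uu.inv_mul, one_apply_eq_self]

end AuxAlg2
section AuxAdj

open ContinuousLinearMap

variable {H : Type*} [NormedAddCommGroup H] [InnerProductSpace ℂ H] [CompleteSpace H]
  {T : NonnegOp H}

/-- The resolvent `(Δ+1)⁻¹` is symmetric. -/
lemma NonnegOp.res_inner_symm (T : NonnegOp H) (x y : H) :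
    (inner ℂ (T.res x) y : ℂ) = inner ℂ x (T.res y) := by
  have hx := T.op_res x
  have hy := T.op_res y
  calc (inner ℂ (T.res x) y : ℂ)
      = inner ℂ (T.res x) (T.op ⟨T.res y, T.res_mem y⟩ + T.res y) := by rw [hy]
    _ = inner ℂ (T.res x) ((T.op ⟨T.res y, T.res_mem y⟩ : H)) + inner ℂ (T.res x) (T.res y) :=
        inner_add_right _ _ _
    _ = inner ℂ ((T.op ⟨T.res x, T.res_mem x⟩ : H)) (T.res y) + inner ℂ (T.res x) (T.res y) := by
        rw [T.symm ⟨T.res x, T.res_mem x⟩ ⟨T.res y, T.res_mem y⟩]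
    _ = inner ℂ ((T.op ⟨T.res x, T.res_mem x⟩ : H) + T.res x) (T.res y) :=
        (inner_add_left _ _ _).symm
    _ = inner ℂ x (T.res y) := by rw [hx]

/-- The adjoint of a resolvent at `z` is a resolvent at `conj z`. -/
lemma IsResolventAt.adjoint {z : ℂ} {R : H →L[ℂ] H} (hR : IsResolventAt T z R) :
    IsResolventAt T (starRingEnd ℂ z) (ContinuousLinearMap.adjoint R) := by
  set A := ContinuousLinearMap.adjoint R with hA
  have hAinner : ∀ (u v : H), (inner ℂ (A u) v : ℂ) = inner ℂ u (R v) := fun u v =>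
    ContinuousLinearMap.adjoint_inner_left R v u
  have key : ∀ u : H, A u = T.res (u + ((starRingEnd ℂ z) + 1) • A u) := by
    intro u
    apply ext_inner_right ℂ
    intro h
    have hre : T.res h + (z + 1) • R (T.res h) = R h := by
      have hid := hR.sub_eq₁ T.res_isResolventAt h
      rw [show z - (-1) = z + 1 by ring] at hid
      rw [← hid]; abel
    rw [hAinner, T.res_inner_symm, inner_add_left, inner_smul_left, hAinner,
      ← hre, inner_add_right, inner_smul_right]
    simp only [map_add, map_one, Complex.conj_conj]
  have hmem : ∀ u : H, A u ∈ T.domain := fun u => by rw [key u]; exact T.res_mem _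
  refine ⟨hmem, ?_, ?_⟩
  · intro u
    have h2 := T.op_res (u + ((starRingEnd ℂ z) + 1) • A u)
    have h3 : T.op ⟨A u, hmem u⟩
        = T.op ⟨T.res (u + ((starRingEnd ℂ z) + 1) • A u), T.res_mem _⟩ := by
      congr 1
      exact Subtype.ext (key u)
    have h5 : T.op ⟨T.res (u + ((starRingEnd ℂ z) + 1) • A u), T.res_mem _⟩
        = (u + ((starRingEnd ℂ z) + 1) • A u) - T.res (u + ((starRingEnd ℂ z) + 1) • A u) :=
      eq_sub_of_add_eq h2
    rw [h3, h5, ← key u]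
    module
  · intro f
    apply ext_inner_right ℂ
    intro h
    rw [hAinner, inner_sub_left, inner_smul_left]
    have hmem' : R h ∈ T.domain := hR.mem h
    have hsymm : (inner ℂ ((T.op f : H)) (R h) : ℂ) = inner ℂ (f : H) ((T.op ⟨R h, hmem'⟩ : H)) :=
      T.symm f ⟨R h, hmem'⟩
    rw [hsymm]
    have h4 := hR.right_inv h
    have hfin : (inner ℂ (f : H) ((T.op ⟨R h, hmem'⟩ : H)) : ℂ) - z * inner ℂ (f : H) (R h)
        = inner ℂ (f : H) h := by
      rw [← inner_smul_right, ← inner_sub_right]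
      exact congrArg _ h4
    simp only [Complex.conj_conj]
    exact hfin

/-- Resolvents are normal operators. -/
lemma IsResolventAt.isStarNormal {z : ℂ} {R : H →L[ℂ] H} (hR : IsResolventAt T z R) :
    IsStarNormal R := by
  constructor
  rw [ContinuousLinearMap.star_eq_adjoint]
  by_cases hzz : (starRingEnd ℂ) z = z
  · have : ContinuousLinearMap.adjoint R = R := by
      have := hR.adjoint
      rw [hzz] at this
      exact this.unique hR
    rw [this]
  · ext u
    have hA := hR.adjoint
    have h1 := hR.sub_eq₁ hA u
    have h2 := hR.sub_eq₂ hA u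
    have h3 : (z - starRingEnd ℂ z) • R ((ContinuousLinearMap.adjoint R) u)
        = (z - starRingEnd ℂ z) • (ContinuousLinearMap.adjoint R) (R u) := by
      rw [← h1, ← h2]
    have hne : z - starRingEnd ℂ z ≠ 0 := sub_ne_zero.mpr (Ne.symm hzz)
    have := smul_right_injective H hne h3
    simpa [mul_apply_eq_comp] using this.symm

end AuxAdj
section AuxSpec

open ContinuousLinearMap
open scoped ENNReal NNReal

variable {H : Type*} [NormedAddCommGroup H] [InnerProductSpace ℂ H] [CompleteSpace H]
  {T : NonnegOp H}

lemma NonnegOp.exists_domain_ne_zero (T : NonnegOp H) [Nontrivial H] :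
    ∃ f : T.domain, (f : H) ≠ 0 := by
  by_contra hcon
  push_neg at hcon
  have hsub : (T.domain : Set H) ⊆ {0} := by
    intro x hx
    exact hcon ⟨x, hx⟩
  obtain ⟨x, hx⟩ := exists_ne (0 : H)
  have : x ∈ closure (T.domain : Set H) := T.dense x
  have : x ∈ ({0} : Set H) :=
    closure_minimal hsub isClosed_singleton this
  exact hx this

lemma IsResolventAt.ne_zero [Nontrivial H] {z : ℂ} {R : H →L[ℂ] H}
    (hR : IsResolventAt T z R) : R ≠ 0 := by
  obtain ⟨f, hf⟩ := T.exists_domain_ne_zero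
  intro h0
  have := hR.left_inv f
  rw [h0] at this
  simp only [ContinuousLinearMap.zero_apply] at this
  exact hf this.symm

instance nontrivial_clm [Nontrivial H] : Nontrivial (H →L[ℂ] H) := by
  obtain ⟨x, hx⟩ := exists_ne (0 : H)
  refine ⟨1, 0, fun h => hx ?_⟩
  have := congrArg (fun A : H →L[ℂ] H => A x) h
  simpa using this

/-- The spectrum of a nonneg operator on a nontrivial space is nonempty. -/
lemma NonnegOp.spec_nonempty (T : NonnegOp H) [Nontrivial H] : T.spec.Nonempty := by
  have hres := T.res_isResolventAt
  have hsa : IsSelfAdjoint T.res := by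
    rw [IsSelfAdjoint, ContinuousLinearMap.star_eq_adjoint]
    ext x
    apply ext_inner_right ℂ
    intro y
    rw [ContinuousLinearMap.adjoint_inner_left, ← T.res_inner_symm]
  obtain ⟨μ, hμmem, hμ⟩ := spectrum.exists_nnnorm_eq_spectralRadius T.res
  have hrad : spectralRadius ℂ T.res = ‖T.res‖₊ := hsa.spectralRadius_eq_nnnorm
  have hRne : T.res ≠ 0 := hres.ne_zero
  have hμne : μ ≠ 0 := by
    intro h0
    rw [h0] at hμ
    rw [hrad] at hμ
    simp only [nnnorm_zero, ENNReal.coe_zero] at hμ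
    exact hRne (by
      have : (‖T.res‖₊ : ℝ≥0∞) = 0 := hμ.symm
      simpa [nnnorm_eq_zero] using this)
  refine ⟨-1 + μ⁻¹, ?_⟩
  rintro ⟨S, hS⟩
  have := hres.isUnit_algebraMap_sub hμne hS
  exact (spectrum.mem_iff.mp hμmem) this

/-- Norm bound for the resolvent in terms of the distance to the spectrum. -/
lemma IsResolventAt.norm_le {z : ℂ} {R : H →L[ℂ] H} (hR : IsResolventAt T z R)
    {d : ℝ} (hd : 0 < d) (hdist : ∀ lam ∈ T.spec, d ≤ dist z lam) :
    ‖R‖ ≤ 1 / d := by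
  haveI : IsStarNormal R := hR.isStarNormal
  have key : ∀ μ ∈ spectrum ℂ R, ‖μ‖ ≤ 1 / d := by
    intro μ hμ
    by_contra hcon
    push_neg at hcon
    have hμpos : 0 < ‖μ‖ := lt_trans (one_div_pos.mpr hd) hcon
    have hμne : μ ≠ 0 := by
      intro h; rw [h] at hμpos; simp at hμpos
    have hinvlt : (‖μ‖)⁻¹ < d := by
      have h1 : d * (1/d) < d * ‖μ‖ := by
        exact mul_lt_mul_of_pos_left hcon hd
      rw [mul_one_div, div_self hd.ne'] at h1
      rw [inv_lt_iff_one_lt_mul₀ hμpos]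
      nlinarith [h1]
    have hlam : z + μ⁻¹ ∉ T.spec := by
      intro hmem
      have := hdist _ hmem
      have hdistval : dist z (z + μ⁻¹) = (‖μ‖)⁻¹ := by
        rw [dist_eq_norm]
        simp [map_inv₀]
      rw [hdistval] at this
      exact absurd this (not_le.mpr hinvlt)
    rw [NonnegOp.spec, Set.mem_setOf_eq, not_not] at hlam
    obtain ⟨S, hS⟩ := hlam
    exact (spectrum.mem_iff.mp hμ) (hR.isUnit_algebraMap_sub hμne hS)
  have hsr : spectralRadius ℂ R = ‖R‖₊ := IsStarNormal.spectralRadius_eq_nnnorm R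
  have hb : spectralRadius ℂ R ≤ ENNReal.ofReal (1 / d) := by
    rw [spectralRadius]
    refine iSup₂_le fun μ hμ => ?_
    rw [← enorm_eq_nnnorm, ← ofReal_norm]
    exact ENNReal.ofReal_le_ofReal (by simpa using key μ hμ)
  rw [hsr] at hb
  rw [← enorm_eq_nnnorm, ← ofReal_norm] at hb
  exact (ENNReal.ofReal_le_ofReal_iff (by positivity)).mp hb

end AuxSpec
section CoreAux

variable {H : Type*} [NormedAddCommGroup H] [InnerProductSpace ℂ H] [CompleteSpace H]
  {D : Submodule ℂ H} {E : EnergyFormOn H D} {T : NonnegOp H}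

/-- Basic bounds: for `g = (Δ+1)⁻¹ f` one has `‖Δ g‖ ≤ ‖f‖`, `‖g‖_e ≤ ‖f‖`, `‖g‖ ≤ ‖f‖`. -/
lemma res_enorm_bounds (hT : IsAssociatedOp E T) (f : H) :
    ‖(T.op ⟨T.res f, T.res_mem f⟩ : H)‖ ≤ ‖f‖ ∧
    E.enorm ⟨T.res f, hT.le (T.res_mem f)⟩ ≤ ‖f‖ ∧ ‖T.res f‖ ≤ ‖f‖ := by
  set g : H := T.res f with hgdef
  set gd : T.domain := ⟨g, T.res_mem f⟩ with hgd
  set k : H := (T.op gd : H) with hk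
  have hfk : k + g = f := T.op_res f
  set gD : D := ⟨g, hT.le (T.res_mem f)⟩ with hgD
  have hform_g : E.form gD gD = (inner ℂ k g : ℂ) := hT.compat gd gD
  have hs : (inner ℂ f g : ℂ).re = (E.form gD gD).re + ‖g‖ ^ 2 := by
    have h1 : (inner ℂ f g : ℂ) = inner ℂ k g + inner ℂ g g := by
      rw [← hfk, inner_add_left]
    rw [h1, Complex.add_re, hform_g]
    congr 1
    simpa using inner_self_eq_norm_sq (𝕜 := ℂ) g
  have hsnn : 0 ≤ (E.form gD gD).re := E.nonneg gD
  have hs_le : (inner ℂ f g : ℂ).re ≤ ‖f‖ * ‖g‖ := by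
    have := re_inner_le_norm (𝕜 := ℂ) f g
    simpa using this
  have hg_le : ‖g‖ ≤ ‖f‖ := by
    nlinarith [norm_nonneg g, norm_nonneg f, hs, hsnn, hs_le]
  have hfg2 : ‖f‖ * ‖g‖ ≤ ‖f‖ ^ 2 := by nlinarith [hg_le, norm_nonneg f]
  refine ⟨?_, ?_, hg_le⟩
  · have hkfg : k = f - g := eq_sub_of_add_eq hfk
    have h1 : ‖f - g‖ ^ 2 = ‖f‖ ^ 2 - 2 * (inner ℂ f g : ℂ).re + ‖g‖ ^ 2 := by
      simpa using norm_sub_sq (𝕜 := ℂ) f g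
    rw [hkfg]
    nlinarith [norm_nonneg (f - g), norm_nonneg f, norm_nonneg g, h1, hs, hsnn]
  · rw [EnergyFormOn.enorm]
    have h2 : ‖(gD : H)‖ = ‖g‖ := by rw [hgD]
    have h1 : ‖(gD : H)‖ ^ 2 + (E.form gD gD).re ≤ ‖f‖ ^ 2 := by
      rw [h2]
      linarith [hs, hs_le, hfg2]
    calc Real.sqrt (‖(gD : H)‖ ^ 2 + (E.form gD gD).re)
        ≤ Real.sqrt (‖f‖ ^ 2) := Real.sqrt_le_sqrt h1
      _ = ‖f‖ := Real.sqrt_sq (norm_nonneg f)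

end CoreAux

section Core

variable {H H' : Type*}
  [NormedAddCommGroup H] [InnerProductSpace ℂ H] [CompleteSpace H]
  [NormedAddCommGroup H'] [InnerProductSpace ℂ H'] [CompleteSpace H']
  {D : Submodule ℂ H} {D' : Submodule ℂ H'}
  {E : EnergyFormOn H D} {E' : EnergyFormOn H' D'}
  {T : NonnegOp H} {T' : NonnegOp H'}
  {δ : ℝ}
  {J : H →L[ℂ] H'} {J' : H' →L[ℂ] H}
  {J1 : D →ₗ[ℂ] D'} {J1' : D' →ₗ[ℂ] D}

set_option maxHeartbeats 1000000 in
lemma core_inner_bound (hT : IsAssociatedOp E T) (hT' : IsAssociatedOp E' T')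
    (hδ : 0 ≤ δ) (hQUE : FormQUE E E' δ J J' J1 J1') (f : H) (u : H') :
    ‖(inner ℂ (T'.res (J f) - J (T.res f)) u : ℂ)‖ ≤ 4 * δ * (‖f‖ * ‖u‖) := by
  obtain ⟨hk_le, henorm_g, hg_le⟩ := res_enorm_bounds hT f
  obtain ⟨hm_le, henorm_w, hw_le⟩ := res_enorm_bounds hT' u
  set g : H := T.res f with hg
  set gd : T.domain := ⟨g, T.res_mem f⟩ with hgd
  set k : H := (T.op gd : H) with hk
  have hfk : k + g = f := T.op_res f
  set w : H' := T'.res u with hw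
  set wd : T'.domain := ⟨w, T'.res_mem u⟩ with hwd
  set m : H' := (T'.op wd : H') with hm
  have hum : m + w = u := T'.op_res u
  set gD : D := ⟨g, hT.le (T.res_mem f)⟩ with hgD
  set wD' : D' := ⟨w, hT'.le (T'.res_mem u)⟩ with hwD'
  -- the telescoping identity
  have e0 : (inner ℂ (T'.res (J f) - J g) u : ℂ) = inner ℂ (J f) w - inner ℂ (J g) u := by
    rw [inner_sub_left, T'.res_inner_symm]
  have hJf : (inner ℂ (J f) w : ℂ) = inner ℂ (J k) w + inner ℂ (J g) w := by
    rw [← hfk, map_add, inner_add_left]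
  have hJg : (inner ℂ (J g) u : ℂ) = inner ℂ (J g) m + inner ℂ (J g) w := by
    rw [← hum, inner_add_right]
  have e1 : E.form gD (J1' wD') = (inner ℂ k ((J1' wD' : D) : H) : ℂ) :=
    hT.compat gd (J1' wD')
  have e2 : E'.form (J1 gD) wD' = (inner ℂ ((J1 gD : D') : H') m : ℂ) := by
    have h2 : E'.form wD' (J1 gD) = (inner ℂ m ((J1 gD : D') : H') : ℂ) :=
      hT'.compat wd (J1 gD)
    have h3 : E'.form (J1 gD) wD' = conj (E'.form wD' (J1 gD)) := by
      rw [E'.conj_symm (J1 gD) wD', Complex.conj_conj]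
    rw [h3, h2, inner_conj_symm]
  have main : (inner ℂ (T'.res (J f) - J g) u : ℂ)
      = ((inner ℂ (J k) w : ℂ) - inner ℂ k (J' w))
      + ((inner ℂ k (J' w) : ℂ) - inner ℂ k ((J1' wD' : D) : H))
      + (E.form gD (J1' wD') - E'.form (J1 gD) wD')
      + ((inner ℂ ((J1 gD : D') : H') m : ℂ) - inner ℂ (J g) m) := by
    rw [e0, hJf, hJg, e1, e2]
    ring
  -- bounds for the four error terms
  have b1 : ‖(inner ℂ (J k) w : ℂ) - inner ℂ k (J' w)‖ ≤ δ * ‖k‖ * ‖w‖ :=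
    hQUE.almost_adjoint k w
  have b2 : ‖(inner ℂ k (J' w) : ℂ) - inner ℂ k ((J1' wD' : D) : H)‖
      ≤ ‖k‖ * (δ * E'.enorm wD') := by
    rw [← inner_sub_right]
    calc ‖(inner ℂ k (J' w - ((J1' wD' : D) : H)) : ℂ)‖
        ≤ ‖k‖ * ‖J' w - ((J1' wD' : D) : H)‖ := by
          exact norm_inner_le_norm _ _
      _ ≤ ‖k‖ * (δ * E'.enorm wD') := by
          refine mul_le_mul_of_nonneg_left ?_ (norm_nonneg k)
          rw [norm_sub_rev]
          exact hQUE.compat_right wD'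
  have b3 : ‖E.form gD (J1' wD') - E'.form (J1 gD) wD'‖
      ≤ δ * E.enorm gD * E'.enorm wD' := by
    rw [norm_sub_rev]
    exact hQUE.close gD wD'
  have b4 : ‖(inner ℂ ((J1 gD : D') : H') m : ℂ) - inner ℂ (J g) m‖
      ≤ (δ * E.enorm gD) * ‖m‖ := by
    rw [← inner_sub_left]
    calc ‖(inner ℂ (((J1 gD : D') : H') - J g) m : ℂ)‖
        ≤ ‖((J1 gD : D') : H') - J g‖ * ‖m‖ := by
          exact norm_inner_le_norm _ _
      _ ≤ (δ * E.enorm gD) * ‖m‖ :=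
          mul_le_mul_of_nonneg_right (hQUE.compat_left gD) (norm_nonneg m)
  -- positivity facts
  have h0k : 0 ≤ ‖k‖ := norm_nonneg k
  have h0m : 0 ≤ ‖m‖ := norm_nonneg m
  have h0w : 0 ≤ ‖w‖ := norm_nonneg w
  have h0f : 0 ≤ ‖f‖ := norm_nonneg f
  have h0u : 0 ≤ ‖u‖ := norm_nonneg u
  have h0eg : 0 ≤ E.enorm gD := Real.sqrt_nonneg _
  have h0ew : 0 ≤ E'.enorm wD' := Real.sqrt_nonneg _
  -- put everything together
  rw [main]
  have habs : ‖((inner ℂ (J k) w : ℂ) - inner ℂ k (J' w))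
      + ((inner ℂ k (J' w) : ℂ) - inner ℂ k ((J1' wD' : D) : H))
      + (E.form gD (J1' wD') - E'.form (J1 gD) wD')
      + ((inner ℂ ((J1 gD : D') : H') m : ℂ) - inner ℂ (J g) m)‖
      ≤ δ * ‖k‖ * ‖w‖ + ‖k‖ * (δ * E'.enorm wD') + δ * E.enorm gD * E'.enorm wD'
        + (δ * E.enorm gD) * ‖m‖ := by
    refine le_trans (norm_add_le _ _) ?_
    refine add_le_add ?_ b4
    refine le_trans (norm_add_le _ _) ?_
    refine add_le_add ?_ b3
    refine le_trans (norm_add_le _ _) ?_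
    exact add_le_add b1 b2
  refine le_trans habs ?_
  have t1 : δ * ‖k‖ * ‖w‖ ≤ δ * ‖f‖ * ‖u‖ := by gcongr
  have t2 : ‖k‖ * (δ * E'.enorm wD') ≤ ‖f‖ * (δ * ‖u‖) := by gcongr
  have t3 : δ * E.enorm gD * E'.enorm wD' ≤ δ * ‖f‖ * ‖u‖ := by gcongr
  have t4 : (δ * E.enorm gD) * ‖m‖ ≤ (δ * ‖f‖) * ‖u‖ := by gcongr
  linarith [t1, t2, t3, t4]

end Core
section OpNorm

variable {H H' : Type*}
  [NormedAddCommGroup H] [InnerProductSpace ℂ H] [CompleteSpace H]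
  [NormedAddCommGroup H'] [InnerProductSpace ℂ H'] [CompleteSpace H']
  {D : Submodule ℂ H} {D' : Submodule ℂ H'}
  {E : EnergyFormOn H D} {E' : EnergyFormOn H' D'}
  {T : NonnegOp H} {T' : NonnegOp H'}
  {δ : ℝ}
  {J : H →L[ℂ] H'} {J' : H' →L[ℂ] H}
  {J1 : D →ₗ[ℂ] D'} {J1' : D' →ₗ[ℂ] D}

/-- The core estimate: `‖(Δ̃+1)⁻¹ J - J (Δ+1)⁻¹‖ ≤ 4δ`. -/
lemma core_opnorm (hT : IsAssociatedOp E T) (hT' : IsAssociatedOp E' T')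
    (hδ : 0 ≤ δ) (hQUE : FormQUE E E' δ J J' J1 J1') :
    ‖T'.res.comp J - J.comp T.res‖ ≤ 4 * δ := by
  refine ContinuousLinearMap.opNorm_le_bound _ (by positivity) fun f => ?_
  set v : H' := T'.res (J f) - J (T.res f) with hv
  have happ : (T'.res.comp J - J.comp T.res) f = v := rfl
  rw [happ]
  have h := core_inner_bound hT hT' hδ hQUE f v
  rw [← hv] at h
  have h1 : ((inner ℂ v v : ℂ)).re ≤ ‖(inner ℂ v v : ℂ)‖ := Complex.re_le_norm _
  have h2 : ((inner ℂ v v : ℂ)).re = ‖v‖ ^ 2 := by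
    simpa using inner_self_eq_norm_sq (𝕜 := ℂ) v
  replace h : ‖v‖ ^ 2 ≤ 4 * δ * (‖f‖ * ‖v‖) := by linarith
  rcases eq_or_lt_of_le (norm_nonneg v) with h0 | h0
  · rw [← h0]; positivity
  · nlinarith [h, h0, hδ, norm_nonneg f]

end OpNorm

set_option maxHeartbeats 1000000 in
/-- [Post–Simmer, Prp. `q-u-e.qf.op`, resolvent estimate].
If the energy forms `E` (in `H`, with associated operator `Δ = T`) and `E'` (in `H'`,
with associated operator `Δ̃ = T'`) are `δ`-quasi-unitarily equivalent with
identification operators `J`, `J'`, `J¹`, `J'¹`, then for every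
`z ∈ ℂ \ (spec Δ ∪ spec Δ̃)` the resolvents `Rz = (Δ - z)⁻¹` and `Rz' = (Δ̃ - z)⁻¹`
satisfy `‖Rz' J - J Rz‖ ≤ C(z) δ` with
`C(z) = 4 (1 + |z+1| / d(z, spec Δ ∪ spec Δ̃))²`. -/
theorem formQUE_resolvent_estimate
    {H H' : Type*}
    [NormedAddCommGroup H] [InnerProductSpace ℂ H] [CompleteSpace H]
    [NormedAddCommGroup H'] [InnerProductSpace ℂ H'] [CompleteSpace H']
    {D : Submodule ℂ H} {D' : Submodule ℂ H'}
    (E : EnergyFormOn H D) (E' : EnergyFormOn H' D')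
    (T : NonnegOp H) (T' : NonnegOp H')
    (hT : IsAssociatedOp E T) (hT' : IsAssociatedOp E' T')
    (δ : ℝ) (hδ : 0 ≤ δ)
    (J : H →L[ℂ] H') (J' : H' →L[ℂ] H)
    (J1 : D →ₗ[ℂ] D') (J1' : D' →ₗ[ℂ] D)
    (hQUE : FormQUE E E' δ J J' J1 J1')
    (z : ℂ) (hz : z ∉ T.spec ∪ T'.spec)
    (Rz : H →L[ℂ] H) (Rz' : H' →L[ℂ] H')
    (hRz : IsResolventAt T z Rz) (hRz' : IsResolventAt T' z Rz') :
    ‖Rz'.comp J - J.comp Rz‖ ≤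
      (4 * (1 + ‖z + 1‖ / Metric.infDist z (T.spec ∪ T'.spec)) ^ 2) * δ := by
  have hRHS0 : 0 ≤ (4 * (1 + ‖z + 1‖ / Metric.infDist z (T.spec ∪ T'.spec)) ^ 2) * δ := by
    have : (0:ℝ) ≤ 4 * (1 + ‖z + 1‖ / Metric.infDist z (T.spec ∪ T'.spec)) ^ 2 := by
      positivity
    exact mul_nonneg this hδ
  rcases subsingleton_or_nontrivial H with hH | hH
  · have h0 : Rz'.comp J - J.comp Rz = 0 := by
      ext f
      have hf0 : f = 0 := Subsingleton.elim f 0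
      simp [hf0]
    rw [h0, norm_zero]
    exact hRHS0
  rcases subsingleton_or_nontrivial H' with hH' | hH'
  · have h0 : Rz'.comp J - J.comp Rz = 0 := by
      ext f
      exact Subsingleton.elim _ _
    rw [h0, norm_zero]
    exact hRHS0
  -- the main case
  rw [Set.mem_union] at hz
  push_neg at hz
  obtain ⟨hz1, hz2⟩ := hz
  obtain ⟨l1, hl1⟩ := T.spec_nonempty
  obtain ⟨l2, hl2⟩ := T'.spec_nonempty
  have hSne : (T.spec ∪ T'.spec).Nonempty := ⟨l1, Or.inl hl1⟩
  set d : ℝ := Metric.infDist z (T.spec ∪ T'.spec) with hd_def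
  have hRzpos : 0 < ‖Rz‖ := norm_pos_iff.mpr hRz.ne_zero
  have hRz'pos : 0 < ‖Rz'‖ := norm_pos_iff.mpr hRz'.ne_zero
  have hr1 : ∀ lam ∈ T.spec, ‖Rz‖⁻¹ ≤ dist z lam := by
    intro lam hlam
    by_contra hcon
    push_neg at hcon
    have hlt : ‖lam - z‖ * ‖Rz‖ < 1 := by
      have h1 : ‖lam - z‖ < ‖Rz‖⁻¹ := by
        rw [← dist_eq_norm, dist_comm]
        exact hcon
      calc ‖lam - z‖ * ‖Rz‖ < ‖Rz‖⁻¹ * ‖Rz‖ := by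
            exact mul_lt_mul_of_pos_right h1 hRzpos
        _ = 1 := inv_mul_cancel₀ hRzpos.ne'
    exact hlam (hRz.exists_near hlt)
  have hr2 : ∀ lam ∈ T'.spec, ‖Rz'‖⁻¹ ≤ dist z lam := by
    intro lam hlam
    by_contra hcon
    push_neg at hcon
    have hlt : ‖lam - z‖ * ‖Rz'‖ < 1 := by
      have h1 : ‖lam - z‖ < ‖Rz'‖⁻¹ := by
        rw [← dist_eq_norm, dist_comm]
        exact hcon
      calc ‖lam - z‖ * ‖Rz'‖ < ‖Rz'‖⁻¹ * ‖Rz'‖ := by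
            exact mul_lt_mul_of_pos_right h1 hRz'pos
        _ = 1 := inv_mul_cancel₀ hRz'pos.ne'
    exact hlam (hRz'.exists_near hlt)
  have hdpos : 0 < d := by
    have hminpos : 0 < min ‖Rz‖⁻¹ ‖Rz'‖⁻¹ :=
      lt_min (inv_pos.mpr hRzpos) (inv_pos.mpr hRz'pos)
    have hmin_le : min ‖Rz‖⁻¹ ‖Rz'‖⁻¹ ≤ d := by
      by_contra hlt
      push_neg at hlt
      obtain ⟨lam, hlam, hdist⟩ := (Metric.infDist_lt_iff hSne).mp hlt
      rcases hlam with hmem | hmem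
      · exact absurd hdist (not_lt.mpr (le_trans (min_le_left _ _) (hr1 lam hmem)))
      · exact absurd hdist (not_lt.mpr (le_trans (min_le_right _ _) (hr2 lam hmem)))
    linarith
  have hb1 : ‖Rz‖ ≤ 1 / d :=
    hRz.norm_le hdpos fun lam hlam =>
      Metric.infDist_le_dist_of_mem (Set.mem_union_left _ hlam)
  have hb2 : ‖Rz'‖ ≤ 1 / d :=
    hRz'.norm_le hdpos fun lam hlam =>
      Metric.infDist_le_dist_of_mem (Set.mem_union_right _ hlam)
  -- factorization
  set P : H →L[ℂ] H := ContinuousLinearMap.id ℂ H + (z + 1) • Rz with hP_def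
  set P' : H' →L[ℂ] H' := ContinuousLinearMap.id ℂ H' + (z + 1) • Rz' with hP'_def
  set K : H →L[ℂ] H' := T'.res.comp J - J.comp T.res with hK_def
  have hPres : ∀ x : H, T.res (P x) = Rz x := by
    intro x
    have hid := hRz.sub_eq₂ T.res_isResolventAt x
    rw [show z - (-1) = z + 1 by ring] at hid
    have h1 : T.res (P x) = T.res x + (z + 1) • T.res (Rz x) := by
      rw [hP_def]
      simp only [ContinuousLinearMap.add_apply, ContinuousLinearMap.smul_apply,
        ContinuousLinearMap.id_apply, map_add, map_smul]
    rw [h1, ← hid]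
    abel
  have hP'res : ∀ y : H', P' (T'.res y) = Rz' y := by
    intro y
    have hid := hRz'.sub_eq₁ T'.res_isResolventAt y
    rw [show z - (-1) = z + 1 by ring] at hid
    have h1 : P' (T'.res y) = T'.res y + (z + 1) • Rz' (T'.res y) := by
      rw [hP'_def]
      simp only [ContinuousLinearMap.add_apply, ContinuousLinearMap.smul_apply,
        ContinuousLinearMap.id_apply]
    rw [h1, ← hid]
    abel
  have hfact : Rz'.comp J - J.comp Rz = P'.comp (K.comp P) := by
    ext x
    simp only [ContinuousLinearMap.comp_apply, ContinuousLinearMap.sub_apply, hK_def]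
    rw [hPres x, map_sub, hP'res (J (P x))]
    have hPx : P x = x + (z + 1) • Rz x := by
      rw [hP_def]
      simp only [ContinuousLinearMap.add_apply, ContinuousLinearMap.smul_apply,
        ContinuousLinearMap.id_apply]
    have hP'y : ∀ y : H', P' y = y + (z + 1) • Rz' y := by
      intro y
      rw [hP'_def]
      simp only [ContinuousLinearMap.add_apply, ContinuousLinearMap.smul_apply,
        ContinuousLinearMap.id_apply]
    rw [hPx, hP'y]
    simp only [map_add, map_smul]
    module
  rw [hfact]
  have hK : ‖K‖ ≤ 4 * δ := core_opnorm hT hT' hδ hQUE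
  have habs0 : 0 ≤ ‖z + 1‖ := norm_nonneg _
  have hc0 : 0 ≤ ‖z + 1‖ / d := div_nonneg habs0 hdpos.le
  have hP : ‖P‖ ≤ 1 + ‖z + 1‖ / d := by
    calc ‖P‖ ≤ ‖ContinuousLinearMap.id ℂ H‖ + ‖(z + 1) • Rz‖ := by
          rw [hP_def]; exact norm_add_le _ _
      _ ≤ 1 + ‖z + 1‖ * (1 / d) := by
          rw [norm_smul]
          exact add_le_add ContinuousLinearMap.norm_id_le
            (mul_le_mul_of_nonneg_left hb1 habs0)
      _ = 1 + ‖z + 1‖ / d := by rw [mul_one_div]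
  have hP' : ‖P'‖ ≤ 1 + ‖z + 1‖ / d := by
    calc ‖P'‖ ≤ ‖ContinuousLinearMap.id ℂ H'‖ + ‖(z + 1) • Rz'‖ := by
          rw [hP'_def]; exact norm_add_le _ _
      _ ≤ 1 + ‖z + 1‖ * (1 / d) := by
          rw [norm_smul]
          exact add_le_add ContinuousLinearMap.norm_id_le
            (mul_le_mul_of_nonneg_left hb2 habs0)
      _ = 1 + ‖z + 1‖ / d := by rw [mul_one_div]
  have h1c : (0:ℝ) ≤ 1 + ‖z + 1‖ / d := by linarith
  calc ‖P'.comp (K.comp P)‖ ≤ ‖P'‖ * ‖K.comp P‖ := ContinuousLinearMap.opNorm_comp_le _ _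
    _ ≤ ‖P'‖ * (‖K‖ * ‖P‖) :=
        mul_le_mul_of_nonneg_left (ContinuousLinearMap.opNorm_comp_le _ _) (norm_nonneg _)
    _ ≤ (1 + ‖z + 1‖ / d) * ((4 * δ) * (1 + ‖z + 1‖ / d)) := by
        refine mul_le_mul hP' ?_ (by positivity) h1c
        exact mul_le_mul hK hP (norm_nonneg _) (by positivity)
    _ = (4 * (1 + ‖z + 1‖ / d) ^ 2) * δ := by ring

end
end

section
/- If the energy forms e in H and ẽ in H̃ are δ-quasi-unitarily equivalent with identification operators J, J', J¹, J'¹, then the associated non-negative self-adjoint operators Δ and Δ̃ are 4δ-operator-quasi-unitarily equivalent with identification operators J and J'; in particular ‖(Δ̃+1)⁻¹ J − J (Δ+1)⁻¹‖ ≤ 4δ. -/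
open scoped ComplexConjugate

noncomputable section

/-- `δ`-operator-quasi-unitary equivalence of `T` and `T'` with identification
operators `J` and `J'`. -/
structure OpQUE {H H' : Type*} [NormedAddCommGroup H] [InnerProductSpace ℂ H]
    [CompleteSpace H] [NormedAddCommGroup H'] [InnerProductSpace ℂ H'] [CompleteSpace H']
    (T : NonnegOp H) (T' : NonnegOp H') (δ : ℝ)
    (J : H →L[ℂ] H') (J' : H' →L[ℂ] H) : Prop where
  norm_J : ‖J‖ ≤ 1 + δ
  adjoint_close : ‖ContinuousLinearMap.adjoint J - J'‖ ≤ δ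
  inv_left : ‖(ContinuousLinearMap.id ℂ H - J'.comp J).comp T.res‖ ≤ δ
  inv_right : ‖(ContinuousLinearMap.id ℂ H' - J.comp J').comp T'.res‖ ≤ δ
  intertwine : ‖T'.res.comp J - J.comp T.res‖ ≤ δ



private lemma quad_norm_le {x c : ℝ} (hx : 0 ≤ x) (h : x ^ 2 ≤ c * x) (hc : 0 ≤ c) : x ≤ c := by
  rcases eq_or_lt_of_le hx with h0 | h0
  · linarith
  · nlinarith

lemma NonnegOp.res_symm {H : Type*} [NormedAddCommGroup H] [InnerProductSpace ℂ H]
    [CompleteSpace H] (T : NonnegOp H) (u w : H) :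
    (inner ℂ (T.res u) w : ℂ) = inner ℂ u (T.res w) := by
  have ha := T.op_res u
  have hb := T.op_res w
  set a : T.domain := ⟨T.res u, T.res_mem u⟩ with hadef
  set b : T.domain := ⟨T.res w, T.res_mem w⟩ with hbdef
  have h1 : (inner ℂ (a : H) (T.op b) : ℂ) = inner ℂ (T.op a) (b : H) := (T.symm a b).symm
  calc (inner ℂ (T.res u) w : ℂ) = inner ℂ (a : H) (T.op b + (b : H)) := by rw [hb]
    _ = inner ℂ (a : H) (T.op b) + inner ℂ (a : H) (b : H) := inner_add_right _ _ _
    _ = inner ℂ (T.op a) (b : H) + inner ℂ (a : H) (b : H) := by rw [h1]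
    _ = inner ℂ (T.op a + (a : H)) (b : H) := (inner_add_left _ _ _).symm
    _ = inner ℂ u (T.res w) := by rw [ha]

/-- Basic estimates for `f = (Δ+1)⁻¹ g`: `‖f‖ ≤ ‖f‖_e` and `‖f‖_e ^ 2 + ‖Δ f‖ ^ 2 ≤ ‖g‖ ^ 2`. -/
lemma resolvent_facts {H : Type*} [NormedAddCommGroup H] [InnerProductSpace ℂ H]
    [CompleteSpace H] {D : Submodule ℂ H} (E : EnergyFormOn H D) (T : NonnegOp H)
    (hT : IsAssociatedOp E T) (g : H) :
    ‖(T.res g : H)‖ ≤ E.enorm ⟨T.res g, hT.le (T.res_mem g)⟩ ∧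
      (E.enorm ⟨T.res g, hT.le (T.res_mem g)⟩) ^ 2 +
        ‖T.op ⟨T.res g, T.res_mem g⟩‖ ^ 2 ≤ ‖g‖ ^ 2 := by
  set f : H := T.res g with hf
  set fT : T.domain := ⟨f, T.res_mem g⟩ with hfT
  set fD : D := ⟨f, hT.le (T.res_mem g)⟩ with hfD
  set p : H := T.op fT with hp
  have hcompat : E.form fD fD = (inner ℂ p f : ℂ) := hT.compat fT fD
  have hre : 0 ≤ (inner ℂ p f : ℂ).re := T.nonneg fT
  have hsum : p + f = g := T.op_res g
  have henorm : E.enorm fD = Real.sqrt (‖f‖ ^ 2 + (inner ℂ p f : ℂ).re) := by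
    rw [EnergyFormOn.enorm, hcompat]
  have hnn : 0 ≤ ‖f‖ ^ 2 + (inner ℂ p f : ℂ).re := by positivity
  have hsq : (E.enorm fD) ^ 2 = ‖f‖ ^ 2 + (inner ℂ p f : ℂ).re := by
    rw [henorm, Real.sq_sqrt hnn]
  have hg2 : ‖g‖ ^ 2 = ‖p‖ ^ 2 + 2 * (inner ℂ p f : ℂ).re + ‖f‖ ^ 2 := by
    rw [← hsum]
    simpa using norm_add_sq (𝕜 := ℂ) p f
  constructor
  · rw [henorm]
    have h2 : Real.sqrt (‖f‖ ^ 2) ≤ Real.sqrt (‖f‖ ^ 2 + (inner ℂ p f : ℂ).re) :=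
      Real.sqrt_le_sqrt (by linarith)
    rwa [Real.sqrt_sq (norm_nonneg f)] at h2
  · rw [hsq]; linarith

set_option maxHeartbeats 1600000 in
/-- [Post, Prp. 4.4.15].  If the energy forms `E` and `E'` are
`δ`-quasi-unitarily equivalent with identification operators `J`, `J'`, `J¹`, `J'¹`,
then the associated non-negative self-adjoint operators `Δ = T` and `Δ̃ = T'` are
`4δ`-operator-quasi-unitarily equivalent with identification operators `J` and `J'`;
in particular `‖(Δ̃+1)⁻¹ J - J (Δ+1)⁻¹‖ ≤ 4δ`. -/
theorem formQUE_to_opQUE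
    {H H' : Type*}
    [NormedAddCommGroup H] [InnerProductSpace ℂ H] [CompleteSpace H]
    [NormedAddCommGroup H'] [InnerProductSpace ℂ H'] [CompleteSpace H']
    {D : Submodule ℂ H} {D' : Submodule ℂ H'}
    (E : EnergyFormOn H D) (E' : EnergyFormOn H' D')
    (T : NonnegOp H) (T' : NonnegOp H')
    (hT : IsAssociatedOp E T) (hT' : IsAssociatedOp E' T')
    (δ : ℝ) (hδ : 0 ≤ δ)
    (J : H →L[ℂ] H') (J' : H' →L[ℂ] H)
    (J1 : D →ₗ[ℂ] D') (J1' : D' →ₗ[ℂ] D)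
    (hQUE : FormQUE E E' δ J J' J1 J1') :
    OpQUE T T' (4 * δ) J J' ∧ ‖T'.res.comp J - J.comp T.res‖ ≤ 4 * δ := by
  have h4 : (0:ℝ) ≤ 4 * δ := by linarith
  -- (1) norm of J
  have hnormJ : ‖J‖ ≤ 1 + 4 * δ := by
    refine ContinuousLinearMap.opNorm_le_bound _ (by linarith) (fun f => ?_)
    calc ‖J f‖ ≤ (1 + δ) * ‖f‖ := hQUE.bounded f
      _ ≤ (1 + 4 * δ) * ‖f‖ := by nlinarith [norm_nonneg f]
  -- (2) adjoint close
  have hadj : ‖ContinuousLinearMap.adjoint J - J'‖ ≤ 4 * δ := by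
    refine ContinuousLinearMap.opNorm_le_bound _ h4 (fun u => ?_)
    set x : H := (ContinuousLinearMap.adjoint J - J') u with hx
    have hx' : x = ContinuousLinearMap.adjoint J u - J' u := by
      rw [hx, ContinuousLinearMap.sub_apply]
    have hxx : (inner ℂ x x : ℂ) = (inner ℂ (J x) u : ℂ) - inner ℂ x (J' u) := by
      calc (inner ℂ x x : ℂ) = inner ℂ x (ContinuousLinearMap.adjoint J u - J' u) := by rw [← hx']
        _ = inner ℂ x (ContinuousLinearMap.adjoint J u) - inner ℂ x (J' u) := inner_sub_right _ _ _
        _ = (inner ℂ (J x) u : ℂ) - inner ℂ x (J' u) := by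
            rw [ContinuousLinearMap.adjoint_inner_right]
    have hnormxx : ‖(inner ℂ x x : ℂ)‖ = ‖x‖ ^ 2 := by
      rw [inner_self_eq_norm_sq_to_K]
      simp [norm_pow]
    have hbound : ‖x‖ ^ 2 ≤ δ * ‖x‖ * ‖u‖ := by
      rw [← hnormxx, hxx]
      exact hQUE.almost_adjoint x u
    have hxle : ‖x‖ ≤ δ * ‖u‖ := by
      refine quad_norm_le (norm_nonneg x) (by nlinarith) (by positivity)
    calc ‖x‖ ≤ δ * ‖u‖ := hxle
      _ ≤ 4 * δ * ‖u‖ := by nlinarith [norm_nonneg u]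
  -- (3) inv_left
  have hinvL : ‖(ContinuousLinearMap.id ℂ H - J'.comp J).comp T.res‖ ≤ 4 * δ := by
    refine ContinuousLinearMap.opNorm_le_bound _ h4 (fun g => ?_)
    obtain ⟨hf1, hf2⟩ := resolvent_facts E T hT g
    set fD : D := ⟨T.res g, hT.le (T.res_mem g)⟩ with hfD
    have hμ0 : 0 ≤ E.enorm fD := Real.sqrt_nonneg _
    have hμg : E.enorm fD ≤ ‖g‖ := by
      nlinarith [norm_nonneg g, sq_nonneg ‖T.op ⟨T.res g, T.res_mem g⟩‖]
    have happ : (ContinuousLinearMap.id ℂ H - J'.comp J).comp T.res g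
        = (fD : H) - J' (J (fD : H)) := by
      simp [ContinuousLinearMap.comp_apply, ContinuousLinearMap.sub_apply, hfD]
    rw [happ]
    calc ‖(fD : H) - J' (J (fD : H))‖ ≤ δ * E.enorm fD := hQUE.inv_left fD
      _ ≤ 4 * δ * ‖g‖ := by nlinarith
  -- (4) inv_right
  have hinvR : ‖(ContinuousLinearMap.id ℂ H' - J.comp J').comp T'.res‖ ≤ 4 * δ := by
    refine ContinuousLinearMap.opNorm_le_bound _ h4 (fun u => ?_)
    obtain ⟨hf1, hf2⟩ := resolvent_facts E' T' hT' u
    set uD : D' := ⟨T'.res u, hT'.le (T'.res_mem u)⟩ with huD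
    have hμ0 : 0 ≤ E'.enorm uD := Real.sqrt_nonneg _
    have hμg : E'.enorm uD ≤ ‖u‖ := by
      nlinarith [norm_nonneg u, sq_nonneg ‖T'.op ⟨T'.res u, T'.res_mem u⟩‖]
    have happ : (ContinuousLinearMap.id ℂ H' - J.comp J').comp T'.res u
        = (uD : H') - J (J' (uD : H')) := by
      simp [ContinuousLinearMap.comp_apply, ContinuousLinearMap.sub_apply, huD]
    rw [happ]
    calc ‖(uD : H') - J (J' (uD : H'))‖ ≤ δ * E'.enorm uD := hQUE.inv_right uD
      _ ≤ 4 * δ * ‖u‖ := by nlinarith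
  -- (5) intertwining
  have hint : ‖T'.res.comp J - J.comp T.res‖ ≤ 4 * δ := by
    refine ContinuousLinearMap.opNorm_le_bound _ h4 (fun g => ?_)
    obtain ⟨hf1, hf2⟩ := resolvent_facts E T hT g
    set f : H := T.res g with hf
    set fT : T.domain := ⟨f, T.res_mem g⟩ with hfT
    set fD : D := ⟨f, hT.le (T.res_mem g)⟩ with hfD
    set p : H := T.op fT with hp
    set μ : ℝ := E.enorm fD with hμ
    set b : ℝ := ‖p‖ with hb
    have hμ0 : 0 ≤ μ := Real.sqrt_nonneg _
    have hb0 : 0 ≤ b := norm_nonneg _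
    have hg0 : 0 ≤ ‖g‖ := norm_nonneg g
    have hgsum : p + f = g := T.op_res g
    set w : H' := T'.res (J g) - (J1 fD : H') with hw
    obtain ⟨hv1, hv2⟩ := resolvent_facts E' T' hT' w
    set v : H' := T'.res w with hv
    set vT : T'.domain := ⟨v, T'.res_mem w⟩ with hvT
    set vD : D' := ⟨v, hT'.le (T'.res_mem w)⟩ with hvD
    set q : H' := T'.op vT with hq
    set ν : ℝ := E'.enorm vD with hν
    have hν0 : 0 ≤ ν := Real.sqrt_nonneg _
    have hwsum : q + v = w := T'.op_res w
    have hνw : ν ≤ ‖w‖ := by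
      nlinarith [norm_nonneg w, sq_nonneg ‖q‖]
    have hvw : ‖v‖ ≤ ‖w‖ := le_trans hv1 hνw
    -- the key identity ⟪w,w⟫ = ⟪Jg, v⟫ - ẽ(J¹f, v) - ⟪J¹f, v⟫
    have hcompat' : E'.form vD (J1 fD) = (inner ℂ q ((J1 fD : D') : H') : ℂ) :=
      hT'.compat vT (J1 fD)
    have hform' : E'.form (J1 fD) vD = (inner ℂ ((J1 fD : D') : H') q : ℂ) := by
      rw [← inner_conj_symm, ← hcompat', ← E'.conj_symm]
    have key : (inner ℂ w w : ℂ) =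
        (inner ℂ (J g) v : ℂ) - E'.form (J1 fD) vD - inner ℂ ((J1 fD : D') : H') v := by
      calc (inner ℂ w w : ℂ)
          = inner ℂ (T'.res (J g)) w - inner ℂ ((J1 fD : D') : H') w := by
            rw [hw]; exact inner_sub_left _ _ _
        _ = inner ℂ (J g) v - inner ℂ ((J1 fD : D') : H') (q + v) := by
            rw [T'.res_symm (J g) w, hwsum, ← hv]
        _ = inner ℂ (J g) v - (inner ℂ ((J1 fD : D') : H') q + inner ℂ ((J1 fD : D') : H') v) := by
            rw [inner_add_right]
        _ = (inner ℂ (J g) v : ℂ) - E'.form (J1 fD) vD - inner ℂ ((J1 fD : D') : H') v := by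
            rw [hform']; ring
    -- second compat: e(f, J¹'v) = ⟪p, J¹'v⟫
    have hcompat2 : E.form fD (J1' vD) = (inner ℂ p ((J1' vD : D) : H) : ℂ) :=
      hT.compat fT (J1' vD)
    have hJg : J g = J p + J f := by rw [← hgsum, map_add]
    have expand : (inner ℂ w w : ℂ) =
        -(E'.form (J1 fD) vD - E.form fD (J1' vD))
        - (inner ℂ p (((J1' vD : D) : H) - J' v) : ℂ)
        - ((inner ℂ p (J' v) : ℂ) - inner ℂ (J p) v)
        - (inner ℂ (((J1 fD : D') : H') - J f) v : ℂ) := by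
      rw [key, hJg, inner_add_left, hcompat2, inner_sub_right, inner_sub_left]
      ring
    -- estimates of the four error terms
    have hD1 : ‖E'.form (J1 fD) vD - E.form fD (J1' vD)‖ ≤ δ * μ * ν := by
      exact hQUE.close fD vD
    have hD2 : ‖(inner ℂ p (((J1' vD : D) : H) - J' v) : ℂ)‖ ≤ b * (δ * ν) := by
      refine le_trans (norm_inner_le_norm _ _) ?_
      exact mul_le_mul_of_nonneg_left (hQUE.compat_right vD) (norm_nonneg p)
    have hD3 : ‖(inner ℂ p (J' v) : ℂ) - inner ℂ (J p) v‖ ≤ δ * b * ‖v‖ := by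
      rw [← norm_neg, neg_sub]
      exact hQUE.almost_adjoint p v
    have hD4 : ‖(inner ℂ (((J1 fD : D') : H') - J f) v : ℂ)‖ ≤ δ * μ * ‖v‖ := by
      refine le_trans (norm_inner_le_norm _ _) ?_
      have h := hQUE.compat_left fD
      exact mul_le_mul h le_rfl (norm_nonneg v) (by positivity)
    have hnormww : ‖(inner ℂ w w : ℂ)‖ = ‖w‖ ^ 2 := by
      rw [inner_self_eq_norm_sq_to_K]
      simp [norm_pow]
    have hwsq : ‖w‖ ^ 2 ≤ δ * μ * ν + b * (δ * ν) + δ * b * ‖v‖ + δ * μ * ‖v‖ := by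
      rw [← hnormww, expand]
      calc ‖-(E'.form (J1 fD) vD - E.form fD (J1' vD))
            - (inner ℂ p (((J1' vD : D) : H) - J' v) : ℂ)
            - ((inner ℂ p (J' v) : ℂ) - inner ℂ (J p) v)
            - (inner ℂ (((J1 fD : D') : H') - J f) v : ℂ)‖
          ≤ ‖-(E'.form (J1 fD) vD - E.form fD (J1' vD))
            - (inner ℂ p (((J1' vD : D) : H) - J' v) : ℂ)
            - ((inner ℂ p (J' v) : ℂ) - inner ℂ (J p) v)‖
            + ‖(inner ℂ (((J1 fD : D') : H') - J f) v : ℂ)‖ := norm_sub_le _ _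
        _ ≤ (‖-(E'.form (J1 fD) vD - E.form fD (J1' vD))
            - (inner ℂ p (((J1' vD : D) : H) - J' v) : ℂ)‖
            + ‖(inner ℂ p (J' v) : ℂ) - inner ℂ (J p) v‖)
            + ‖(inner ℂ (((J1 fD : D') : H') - J f) v : ℂ)‖ := by
            gcongr; exact norm_sub_le _ _
        _ ≤ ((‖-(E'.form (J1 fD) vD - E.form fD (J1' vD))‖
            + ‖(inner ℂ p (((J1' vD : D) : H) - J' v) : ℂ)‖)
            + ‖(inner ℂ p (J' v) : ℂ) - inner ℂ (J p) v‖)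
            + ‖(inner ℂ (((J1 fD : D') : H') - J f) v : ℂ)‖ := by
            gcongr; exact norm_sub_le _ _
        _ ≤ δ * μ * ν + b * (δ * ν) + δ * b * ‖v‖ + δ * μ * ‖v‖ := by
            rw [norm_neg]
            exact add_le_add (add_le_add (add_le_add hD1 hD2) hD3) hD4
    have hwle : ‖w‖ ≤ 2 * δ * (μ + b) := by
      refine quad_norm_le (norm_nonneg w) ?_ (by positivity)
      have h1 : δ * μ * ν + b * (δ * ν) + δ * b * ‖v‖ + δ * μ * ‖v‖
          ≤ 2 * δ * (μ + b) * ‖w‖ := by nlinarith [mul_nonneg hδ hμ0, mul_nonneg hδ hb0]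
      linarith
    have happ : (T'.res.comp J - J.comp T.res) g = T'.res (J g) - J f := by
      simp [ContinuousLinearMap.comp_apply, ContinuousLinearMap.sub_apply, hf]
    have hsplit : T'.res (J g) - J f = w + (((J1 fD : D') : H') - J f) := by
      rw [hw]; abel
    have h34 : 3 * μ + 2 * b ≤ 4 * ‖g‖ := by
      have hpos : 0 ≤ 3 * μ + 2 * b + 4 * ‖g‖ := by positivity
      nlinarith [sq_nonneg (2 * μ - 3 * b), hf2, hpos]
    rw [happ, hsplit]
    calc ‖w + (((J1 fD : D') : H') - J f)‖ ≤ ‖w‖ + ‖((J1 fD : D') : H') - J f‖ :=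
          norm_add_le _ _
      _ ≤ 2 * δ * (μ + b) + δ * μ := by
          have := hQUE.compat_left fD
          linarith [hwle, this]
      _ ≤ 4 * δ * ‖g‖ := by nlinarith
  exact ⟨⟨hnormJ, hadj, hinvL, hinvR, hint⟩, hint⟩


end
end

section
/- Let e and ẽ be two energy forms in the same Hilbert space H with the same form domain H¹ := dom e = dom ẽ. If 0 ≤ δ < 2 and |ẽ(f,u) − e(f,u)| ≤ δ ‖f‖_e ‖u‖_ẽ for all f, u ∈ H¹, then |ẽ(f,f) − e(f,f)| ≤ δ̂ ‖f‖_e² for all f ∈ H¹, where δ̂ = δ √((2+δ)/(2−δ)). -/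
open scoped ComplexConjugate

noncomputable section

/-- Let `e` and `ẽ` be two energy forms in the same Hilbert space `H`
with the same form domain `H¹ = D`.  If `0 ≤ δ < 2` and
`|ẽ(f,u) − e(f,u)| ≤ δ ‖f‖_e ‖u‖_ẽ` for all `f, u ∈ H¹`, then
`|ẽ(f,f) − e(f,f)| ≤ δ̂ ‖f‖_e²` for all `f ∈ H¹`, where `δ̂ = δ √((2+δ)/(2−δ))`. -/
theorem form_close_diag_of_offdiag
    {H : Type*} [NormedAddCommGroup H] [InnerProductSpace ℂ H] [CompleteSpace H]
    {D : Submodule ℂ H} (E Et : EnergyFormOn H D)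
    (δ : ℝ) (hδ0 : 0 ≤ δ) (hδ2 : δ < 2)
    (h : ∀ f u : D, ‖Et.form f u - E.form f u‖ ≤ δ * E.enorm f * Et.enorm u) :
    ∀ f : D, ‖Et.form f f - E.form f f‖ ≤
      (δ * Real.sqrt ((2 + δ) / (2 - δ))) * E.enorm f ^ 2 := by
  intro f
  set a := E.enorm f with ha_def
  set b := Et.enorm f with hb_def
  have ha : 0 ≤ a := Real.sqrt_nonneg _
  have hb : 0 ≤ b := Real.sqrt_nonneg _
  have ha2 : a ^ 2 = ‖(f : H)‖ ^ 2 + (E.form f f).re :=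
    Real.sq_sqrt (add_nonneg (by positivity) (E.nonneg f))
  have hb2 : b ^ 2 = ‖(f : H)‖ ^ 2 + (Et.form f f).re :=
    Real.sq_sqrt (add_nonneg (by positivity) (Et.nonneg f))
  have h1 := h f f
  have hre : (Et.form f f).re - (E.form f f).re ≤ ‖Et.form f f - E.form f f‖ := by
    have := Complex.abs_re_le_norm (Et.form f f - E.form f f)
    have h2 : (Et.form f f - E.form f f).re = (Et.form f f).re - (E.form f f).re := by
      simp [Complex.sub_re]
    rw [h2] at this
    exact (le_abs_self _).trans this
  have hb2a : b ^ 2 ≤ a ^ 2 + δ * a * b := by nlinarith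
  have hkey : b ^ 2 * (2 - δ) ≤ a ^ 2 * (2 + δ) := by nlinarith [sq_nonneg (a - b)]
  have hr : 0 ≤ (2 + δ) / (2 - δ) := by
    apply div_nonneg <;> linarith
  have hbab : b ≤ a * Real.sqrt ((2 + δ) / (2 - δ)) := by
    have hb2r : b ^ 2 ≤ a ^ 2 * ((2 + δ) / (2 - δ)) := by
      rw [← mul_div_assoc, le_div_iff₀ (by linarith : (0:ℝ) < 2 - δ)]
      nlinarith
    calc b = Real.sqrt (b ^ 2) := (Real.sqrt_sq hb).symm
      _ ≤ Real.sqrt (a ^ 2 * ((2 + δ) / (2 - δ))) := Real.sqrt_le_sqrt hb2r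
      _ = a * Real.sqrt ((2 + δ) / (2 - δ)) := by
          rw [Real.sqrt_mul (sq_nonneg a), Real.sqrt_sq ha]
  calc ‖Et.form f f - E.form f f‖ ≤ δ * a * b := h1
    _ ≤ δ * a * (a * Real.sqrt ((2 + δ) / (2 - δ))) := by
        apply mul_le_mul_of_nonneg_left hbab (by positivity)
    _ = (δ * Real.sqrt ((2 + δ) / (2 - δ))) * a ^ 2 := by ring

end
end

section
/- Let e and ẽ be two energy forms in the same Hilbert space H with the same form domain H¹ := dom e = dom ẽ. If 0 ≤ δ̂ < 1 and |ẽ(f,f) − e(f,f)| ≤ δ̂ ‖f‖_e² for all f ∈ H¹, then |ẽ(f,u) − e(f,u)| ≤ δ ‖f‖_e ‖u‖_ẽ for all f, u ∈ H¹, where δ = δ̂ / √(1−δ̂). -/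
open scoped ComplexConjugate

noncomputable section

namespace EnergyFormOn

variable {H : Type*} [NormedAddCommGroup H] [InnerProductSpace ℂ H] [CompleteSpace H]
  {D : Submodule ℂ H} (E : EnergyFormOn H D)

/-- The form as a linear map in the second argument. -/
def formL (f : D) : D →ₗ[ℂ] ℂ := IsLinearMap.mk' (E.form f) (E.linear_right f)

lemma formL_apply (f g : D) : E.formL f g = E.form f g := rfl

lemma form_add_left (f g k : D) : E.form (f + g) k = E.form f k + E.form g k := by
  rw [E.conj_symm, ← formL_apply, map_add, formL_apply, formL_apply, map_add,
    ← E.conj_symm, ← E.conj_symm]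

lemma form_smul_left (c : ℂ) (f k : D) : E.form (c • f) k = conj c * E.form f k := by
  rw [E.conj_symm, ← formL_apply, map_smul, smul_eq_mul, map_mul, formL_apply,
    ← E.conj_symm]

lemma form_neg_left (f k : D) : E.form (-f) k = - E.form f k := by
  have := E.form_smul_left (-1) f k
  simpa using this

lemma form_sub_left (f g k : D) : E.form (f - g) k = E.form f k - E.form g k := by
  rw [sub_eq_add_neg, form_add_left, form_neg_left, sub_eq_add_neg]

lemma form_add_right (f g k : D) : E.form k (f + g) = E.form k f + E.form k g :=
  (E.linear_right k).map_add f g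

lemma form_neg_right (f k : D) : E.form k (-f) = - E.form k f := by
  rw [← formL_apply, map_neg, formL_apply]

lemma form_sub_right (f g k : D) : E.form k (f - g) = E.form k f - E.form k g := by
  rw [← formL_apply, map_sub, formL_apply, formL_apply]

lemma form_smul_right (c : ℂ) (f k : D) : E.form k (c • f) = c * E.form k f := by
  rw [← formL_apply, map_smul, smul_eq_mul, formL_apply]

lemma form_zero_right (k : D) : E.form k 0 = 0 := by
  rw [← formL_apply, map_zero]

lemma form_zero_left (k : D) : E.form 0 k = 0 := by
  rw [E.conj_symm, form_zero_right, map_zero]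

lemma enorm_nonneg (f : D) : 0 ≤ E.enorm f := Real.sqrt_nonneg _

lemma enorm_sq (f : D) : E.enorm f ^ 2 = ‖(f : H)‖ ^ 2 + (E.form f f).re :=
  Real.sq_sqrt (add_nonneg (sq_nonneg _) (E.nonneg f))

lemma enorm_eq_zero {f : D} (hf : E.enorm f = 0) : f = 0 := by
  have h0 : ‖(f : H)‖ ^ 2 + (E.form f f).re ≤ 0 := by
    exact Real.sqrt_eq_zero'.mp hf
  have hn : ‖(f : H)‖ ^ 2 ≤ 0 := by
    have := E.nonneg f; linarith
  have : ‖(f : H)‖ = 0 := by nlinarith [norm_nonneg (f : H)]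
  have : (f : H) = 0 := norm_eq_zero.mp this
  exact Subtype.ext this

lemma enorm_smul_sq (c : ℂ) (f : D) :
    E.enorm (c • f) ^ 2 = ‖c‖ ^ 2 * E.enorm f ^ 2 := by
  rw [enorm_sq, enorm_sq]
  have h1 : E.form (c • f) (c • f) = ((Complex.normSq c : ℝ) : ℂ) * E.form f f := by
    rw [form_smul_left, form_smul_right]
    rw [← mul_assoc, mul_comm (conj c) c, Complex.mul_conj]
  have h2 : (E.form (c • f) (c • f)).re = ‖c‖ ^ 2 * (E.form f f).re := by
    rw [h1, Complex.re_ofReal_mul, Complex.normSq_eq_norm_sq]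
  have h3 : ‖((c • f : D) : H)‖ ^ 2 = ‖c‖ ^ 2 * ‖(f : H)‖ ^ 2 := by
    have : ((c • f : D) : H) = c • (f : H) := rfl
    rw [this, norm_smul, mul_pow]
  rw [h2, h3]; ring

lemma enorm_parallelogram (f u : D) :
    E.enorm (f + u) ^ 2 + E.enorm (f - u) ^ 2 = 2 * (E.enorm f ^ 2 + E.enorm u ^ 2) := by
  rw [enorm_sq, enorm_sq, enorm_sq, enorm_sq]
  have hn : ‖((f + u : D) : H)‖ ^ 2 + ‖((f - u : D) : H)‖ ^ 2
      = 2 * (‖(f : H)‖ ^ 2 + ‖(u : H)‖ ^ 2) := by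
    have h1 : ((f + u : D) : H) = (f : H) + (u : H) := rfl
    have h2 : ((f - u : D) : H) = (f : H) - (u : H) := rfl
    rw [h1, h2]
    have := parallelogram_law_with_norm ℂ (f : H) (u : H)
    nlinarith [this]
  have hf : E.form (f + u) (f + u) + E.form (f - u) (f - u)
      = 2 * (E.form f f + E.form u u) := by
    rw [form_add_left, form_add_right, form_add_right, form_sub_left,
      form_sub_right, form_sub_right]
    ring
  have hf' : (E.form (f + u) (f + u)).re + (E.form (f - u) (f - u)).re
      = 2 * ((E.form f f).re + (E.form u u).re) := by
    have := congrArg Complex.re hf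
    simpa using this
  linarith

end EnergyFormOn

/-- Let `e` and `ẽ` be two energy forms in the same Hilbert space `H`
with the same form domain `H¹ = D`.  If `0 ≤ δ̂ < 1` and
`|ẽ(f,f) − e(f,f)| ≤ δ̂ ‖f‖_e²` for all `f ∈ H¹`, then
`|ẽ(f,u) − e(f,u)| ≤ δ ‖f‖_e ‖u‖_ẽ` for all `f, u ∈ H¹`, where `δ = δ̂ / √(1−δ̂)`. -/
theorem form_close_offdiag_of_diag
    {H : Type*} [NormedAddCommGroup H] [InnerProductSpace ℂ H] [CompleteSpace H]
    {D : Submodule ℂ H} (E Et : EnergyFormOn H D)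
    (δh : ℝ) (hδ0 : 0 ≤ δh) (hδ1 : δh < 1)
    (h : ∀ f : D, ‖Et.form f f - E.form f f‖ ≤ δh * E.enorm f ^ 2) :
    ∀ f u : D, ‖Et.form f u - E.form f u‖ ≤
      (δh / Real.sqrt (1 - δh)) * E.enorm f * Et.enorm u := by
  set b : D → D → ℂ := fun f u => Et.form f u - E.form f u with hb_def
  set N : D → ℝ := E.enorm with hN_def
  have bsymm : ∀ f u : D, b u f = conj (b f u) := by
    intro f u
    simp only [hb_def, Et.conj_symm f u, E.conj_symm f u, map_sub]
  -- Step 1: bound on the real part via polarization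
  have hre : ∀ f u : D, |(b f u).re| ≤ δh / 2 * (N f ^ 2 + N u ^ 2) := by
    intro f u
    have hexp : b (f + u) (f + u) - b (f - u) (f - u) = 2 * (b f u + conj (b f u)) := by
      simp only [hb_def]
      rw [Et.form_add_left, Et.form_add_right, Et.form_add_right,
        Et.form_sub_left, Et.form_sub_right, Et.form_sub_right,
        E.form_add_left, E.form_add_right, E.form_add_right,
        E.form_sub_left, E.form_sub_right, E.form_sub_right,
        Et.conj_symm f u, E.conj_symm f u, map_sub]
      ring
    have hre4 : (b (f + u) (f + u)).re - (b (f - u) (f - u)).re = 4 * (b f u).re := by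
      have := congrArg Complex.re hexp
      simp only [Complex.sub_re, Complex.mul_re, Complex.add_re, Complex.conj_re,
        Complex.add_im, Complex.conj_im, Complex.re_ofNat, Complex.im_ofNat] at this ⊢
      linarith [this]
    have h1 : ‖b (f + u) (f + u)‖ ≤ δh * N (f + u) ^ 2 := h _
    have h2 : ‖b (f - u) (f - u)‖ ≤ δh * N (f - u) ^ 2 := h _
    have hpar := E.enorm_parallelogram f u
    have ha : |(b (f + u) (f + u)).re| ≤ ‖b (f + u) (f + u)‖ :=
      Complex.abs_re_le_norm _
    have hb2 : |(b (f - u) (f - u)).re| ≤ ‖b (f - u) (f - u)‖ :=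
      Complex.abs_re_le_norm _
    have : |4 * (b f u).re| ≤ δh * N (f + u) ^ 2 + δh * N (f - u) ^ 2 := by
      rw [← hre4]
      calc |(b (f + u) (f + u)).re - (b (f - u) (f - u)).re|
          ≤ |(b (f + u) (f + u)).re| + |(b (f - u) (f - u)).re| := abs_sub _ _
        _ ≤ δh * N (f + u) ^ 2 + δh * N (f - u) ^ 2 := by
            exact add_le_add (ha.trans h1) (hb2.trans h2)
    rw [abs_mul, abs_of_nonneg (by norm_num : (0:ℝ) ≤ 4)] at this
    simp only [hN_def] at this ⊢
    nlinarith [this, hpar]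
  -- Step 2: off-diagonal bound with e-norms on both sides
  have hb : ∀ f u : D, ‖b f u‖ ≤ δh * N f * N u := by
    intro f u
    rcases eq_or_lt_of_le (E.enorm_nonneg f) with hNf | hNf
    · -- N f = 0 ⇒ f = 0
      have hf0 : f = 0 := E.enorm_eq_zero hNf.symm
      have : b f u = 0 := by
        simp only [hb_def, hf0, Et.form_zero_left, E.form_zero_left, sub_zero]
      rw [this, norm_zero]
      exact mul_nonneg (mul_nonneg hδ0 (E.enorm_nonneg f)) (E.enorm_nonneg u)
    rcases eq_or_lt_of_le (E.enorm_nonneg u) with hNu | hNu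
    · have hu0 : u = 0 := E.enorm_eq_zero hNu.symm
      have : b f u = 0 := by
        simp only [hb_def, hu0, Et.form_zero_right, E.form_zero_right, sub_zero]
      rw [this, norm_zero]
      exact mul_nonneg (mul_nonneg hδ0 (E.enorm_nonneg f)) (E.enorm_nonneg u)
    rcases eq_or_ne (b f u) 0 with hb0 | hb0
    · rw [hb0, norm_zero]
      exact mul_nonneg (mul_nonneg hδ0 (E.enorm_nonneg f)) (E.enorm_nonneg u)
    set r : ℝ := ‖b f u‖ with hr_def
    have hr : 0 < r := by
      simp only [hr_def]
      exact (norm_pos_iff.mpr hb0)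
    set c : ℂ := b f u / r with hc_def
    have hcabs : ‖c‖ = 1 := by
      simp only [hc_def, norm_div, Complex.norm_real, Real.norm_eq_abs, abs_of_pos hr, ← hr_def,
        div_self hr.ne']
    set t : ℝ := Real.sqrt (N u / N f) with ht_def
    have ht : 0 < t := Real.sqrt_pos.mpr (div_pos hNu hNf)
    have ht2 : t ^ 2 = N u / N f := Real.sq_sqrt (le_of_lt (div_pos hNu hNf))
    set g : D := (((t : ℂ) * c)) • f with hg_def
    set v : D := (((t⁻¹ : ℝ) : ℂ)) • u with hv_def
    -- b g v = r
    have hbgv : b g v = (r : ℂ) := by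
      have hlin : b g v = conj ((t : ℂ) * c) * (((t⁻¹ : ℝ) : ℂ)) * b f u := by
        simp only [hb_def, hg_def, hv_def, Et.form_smul_left, E.form_smul_left,
          Et.form_smul_right, E.form_smul_right]
        ring
      rw [hlin]
      have hconj : conj ((t : ℂ) * c) = (t : ℂ) * conj c := by
        rw [map_mul, Complex.conj_ofReal]
      rw [hconj, hc_def]
      have hcb : conj (b f u / (r : ℂ)) * b f u = (r : ℂ) := by
        rw [map_div₀, Complex.conj_ofReal, div_mul_eq_mul_div, mul_comm,
          Complex.mul_conj]
        rw [Complex.normSq_eq_norm_sq, ← hr_def]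
        rw [div_eq_iff (by exact_mod_cast hr.ne')]
        push_cast
        ring
      have htinv : ((t : ℂ)) * (((t⁻¹ : ℝ) : ℂ)) = 1 := by
        push_cast
        rw [mul_inv_cancel₀ (by exact_mod_cast ht.ne')]
      calc (t : ℂ) * conj (b f u / (r:ℂ)) * (((t⁻¹ : ℝ) : ℂ)) * b f u
          = ((t : ℂ) * (((t⁻¹ : ℝ) : ℂ))) * (conj (b f u / (r:ℂ)) * b f u) := by ring
        _ = (r : ℂ) := by rw [htinv, hcb, one_mul]
    have hNg : N g ^ 2 = t ^ 2 * N f ^ 2 := by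
      simp only [hN_def, hg_def]
      rw [E.enorm_smul_sq]
      have : ‖(t : ℂ) * c‖ = t := by
        rw [norm_mul, hcabs,
          Complex.norm_real, Real.norm_eq_abs, abs_of_pos ht, mul_one]
      rw [this]
    have hNv : N v ^ 2 = (t ^ 2)⁻¹ * N u ^ 2 := by
      simp only [hN_def, hv_def]
      rw [E.enorm_smul_sq]
      have : ‖(((t⁻¹ : ℝ)) : ℂ)‖ = t⁻¹ := by
        rw [Complex.norm_real, Real.norm_eq_abs, abs_of_pos (inv_pos.mpr ht)]
      rw [this, ← inv_pow]
    have hmain := hre g v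
    rw [hbgv] at hmain
    have hrre : ((r : ℂ)).re = r := Complex.ofReal_re r
    rw [hrre, abs_of_pos hr] at hmain
    rw [hNg, hNv, ht2] at hmain
    have hcalc : δh / 2 * (N u / N f * N f ^ 2 + (N u / N f)⁻¹ * N u ^ 2)
        = δh * N f * N u := by
      field_simp
      ring
    rw [hcalc] at hmain
    exact hmain
  -- Step 3: compare N u with Et.enorm u
  intro f u
  have hNtu : Real.sqrt (1 - δh) * N u ≤ Et.enorm u := by
    have hle : (1 - δh) * N u ^ 2 ≤ ‖(u : H)‖ ^ 2 + (Et.form u u).re := by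
      have hdiff : (Et.form u u - E.form u u).re ≥ - (δh * N u ^ 2) := by
        have h1 : |(Et.form u u - E.form u u).re| ≤ ‖Et.form u u - E.form u u‖ :=
          Complex.abs_re_le_norm _
        have := (h u)
        have h2 : |(Et.form u u - E.form u u).re| ≤ δh * N u ^ 2 := h1.trans this
        linarith [neg_abs_le ((Et.form u u - E.form u u).re)]
      have hNu2 : N u ^ 2 = ‖(u : H)‖ ^ 2 + (E.form u u).re := E.enorm_sq u
      have : (Et.form u u).re = (E.form u u).re + (Et.form u u - E.form u u).re := by
        simp [Complex.sub_re]
      linarith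
    have : Real.sqrt ((1 - δh) * N u ^ 2) ≤ Real.sqrt (‖(u : H)‖ ^ 2 + (Et.form u u).re) :=
      Real.sqrt_le_sqrt hle
    calc Real.sqrt (1 - δh) * N u
        = Real.sqrt ((1 - δh) * N u ^ 2) := by
          rw [Real.sqrt_mul (by linarith : (0:ℝ) ≤ 1 - δh),
            Real.sqrt_sq (E.enorm_nonneg u)]
      _ ≤ Et.enorm u := this
  have hs : 0 < Real.sqrt (1 - δh) := Real.sqrt_pos.mpr (by linarith)
  have hNu_le : N u ≤ Et.enorm u / Real.sqrt (1 - δh) := by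
    rw [le_div_iff₀ hs]
    linarith [hNtu]
  calc ‖Et.form f u - E.form f u‖ = ‖b f u‖ := rfl
    _ ≤ δh * N f * N u := hb f u
    _ ≤ δh * N f * (Et.enorm u / Real.sqrt (1 - δh)) := by
        exact mul_le_mul_of_nonneg_left hNu_le
          (mul_nonneg hδ0 (E.enorm_nonneg f))
    _ = δh / Real.sqrt (1 - δh) * E.enorm f * Et.enorm u := by
        simp only [hN_def]; ring

end
end

section
/- Quantitative Kato-type convergence: let {e_m}_{m∈ℕ} and e_∞ be energy forms in the same Hilbert space H with common form domain dom e_m = dom e_∞ for all m, and let Δ_m, Δ_∞ be the associated non-negative self-adjoint operators. If |e_∞(f,f) − e_m(f,f)| ≤ δ̂_m ‖f‖_{e_∞}² for all f in the common domain, with 0 ≤ δ̂_m < 1, then ‖(Δ_m+1)⁻¹ − (Δ_∞+1)⁻¹‖ ≤ 4 δ̂_m / √(1−δ̂_m); in particular, if δ̂_m → 0 then Δ_m converges to Δ_∞ in norm resolvent sense. -/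
open scoped ComplexConjugate

noncomputable section

namespace KatoAux

open scoped InnerProductSpace

variable {H : Type*} [NormedAddCommGroup H] [InnerProductSpace ℂ H] [CompleteSpace H]
  {D : Submodule ℂ H}

/-- The squared form norm. -/
def q (E : EnergyFormOn H D) (f : D) : ℝ := ‖(f : H)‖ ^ 2 + (E.form f f).re

lemma q_nonneg (E : EnergyFormOn H D) (f : D) : 0 ≤ q E f :=
  add_nonneg (sq_nonneg _) (E.nonneg f)

lemma form_add_left (E : EnergyFormOn H D) (f g h : D) :
    E.form (f + g) h = E.form f h + E.form g h := by
  rw [E.conj_symm h (f + g), (E.linear_right h).map_add, map_add,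
    ← E.conj_symm h f, ← E.conj_symm h g]

lemma form_sub_left (E : EnergyFormOn H D) (f g h : D) :
    E.form (f - g) h = E.form f h - E.form g h := by
  rw [E.conj_symm h (f - g), (E.linear_right h).map_sub, map_sub,
    ← E.conj_symm h f, ← E.conj_symm h g]

lemma form_smul_left (E : EnergyFormOn H D) (c : ℂ) (f h : D) :
    E.form (c • f) h = conj c * E.form f h := by
  rw [E.conj_symm h (c • f), (E.linear_right h).map_smul, smul_eq_mul, map_mul,
    ← E.conj_symm h f]

lemma form_zero_left (E : EnergyFormOn H D) (h : D) : E.form 0 h = 0 := by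
  have := form_sub_left E 0 0 h; simpa using this

lemma form_expand_add (E : EnergyFormOn H D) (f g : D) :
    E.form (f + g) (f + g)
      = E.form f f + E.form f g + conj (E.form f g) + E.form g g := by
  rw [form_add_left, (E.linear_right f).map_add, (E.linear_right g).map_add,
    E.conj_symm f g]
  ring

lemma form_expand_sub (E : EnergyFormOn H D) (f g : D) :
    E.form (f - g) (f - g)
      = E.form f f - E.form f g - conj (E.form f g) + E.form g g := by
  rw [form_sub_left, (E.linear_right f).map_sub, (E.linear_right g).map_sub,
    E.conj_symm f g]
  ring

lemma re_polar (E : EnergyFormOn H D) (f g : D) :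
    (E.form (f + g) (f + g)).re - (E.form (f - g) (f - g)).re
      = 4 * (E.form f g).re := by
  rw [form_expand_add, form_expand_sub]
  simp [Complex.add_re, Complex.sub_re, Complex.conj_re]
  ring

lemma q_parallelogram (E : EnergyFormOn H D) (f g : D) :
    q E (f + g) + q E (f - g) = 2 * q E f + 2 * q E g := by
  have hn := parallelogram_law_with_norm ℂ (f : H) (g : H)
  have e1 : (E.form (f + g) (f + g)).re
      = (E.form f f).re + 2 * (E.form f g).re + (E.form g g).re := by
    rw [form_expand_add]; simp [Complex.add_re, Complex.conj_re]; ring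
  have e2 : (E.form (f - g) (f - g)).re
      = (E.form f f).re - 2 * (E.form f g).re + (E.form g g).re := by
    rw [form_expand_sub]; simp [Complex.sub_re, Complex.add_re, Complex.conj_re]; ring
  have hc1 : ((f + g : D) : H) = (f : H) + (g : H) := rfl
  have hc2 : ((f - g : D) : H) = (f : H) - (g : H) := rfl
  unfold q
  rw [e1, e2, hc1, hc2]
  nlinarith [hn]

end KatoAux

namespace KatoAux

variable {H : Type*} [NormedAddCommGroup H] [InnerProductSpace ℂ H] [CompleteSpace H]
  {D : Submodule ℂ H}

lemma polar (E1 E2 : EnergyFormOn H D) {δ : ℝ} (hδ : 0 ≤ δ)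
    (h : ∀ f : D, ‖E1.form f f - E2.form f f‖ ≤ δ * q E1 f) (f g : D) :
    ‖E1.form f g - E2.form f g‖ ≤ δ / 2 * (q E1 f + q E1 g) := by
  have hre : ∀ f g : D,
      (E1.form f g - E2.form f g).re ≤ δ / 2 * (q E1 f + q E1 g) := by
    intro f g
    have p1 := re_polar E1 f g
    have p2 := re_polar E2 f g
    have b1 : (E1.form (f + g) (f + g) - E2.form (f + g) (f + g)).re
        ≤ δ * q E1 (f + g) := (Complex.re_le_norm _).trans (h (f + g))
    have b2 : -(δ * q E1 (f - g)) ≤ (E1.form (f - g) (f - g) - E2.form (f - g) (f - g)).re := by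
      have := (neg_abs_le (E1.form (f - g) (f - g) - E2.form (f - g) (f - g)).re).trans
        (le_refl _)
      have habs := (Complex.abs_re_le_norm (E1.form (f - g) (f - g) - E2.form (f - g) (f - g))).trans (h (f - g))
      have := abs_le.mp ((abs_le.mpr ⟨neg_abs_le _, le_abs_self _⟩ : |(E1.form (f - g) (f - g) - E2.form (f - g) (f - g)).re| ≤ |(E1.form (f - g) (f - g) - E2.form (f - g) (f - g)).re|))
      linarith [neg_le_of_abs_le habs]
    have hpar := q_parallelogram E1 f g
    have hs1 : (E1.form (f + g) (f + g) - E2.form (f + g) (f + g)).re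
        = (E1.form (f + g) (f + g)).re - (E2.form (f + g) (f + g)).re := Complex.sub_re _ _
    have hs2 : (E1.form (f - g) (f - g) - E2.form (f - g) (f - g)).re
        = (E1.form (f - g) (f - g)).re - (E2.form (f - g) (f - g)).re := Complex.sub_re _ _
    have hs3 : (E1.form f g - E2.form f g).re
        = (E1.form f g).re - (E2.form f g).re := Complex.sub_re _ _
    have hq : δ * q E1 (f + g) + δ * q E1 (f - g)
        = δ * (2 * q E1 f + 2 * q E1 g) := by rw [← mul_add, hpar]
    linarith
  by_cases hz : E1.form f g - E2.form f g = 0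
  · rw [hz]
    simp only [norm_zero]
    have := q_nonneg E1 f
    have := q_nonneg E1 g
    positivity
  · set z := E1.form f g - E2.form f g with hzdef
    have habsz : (‖z‖ : ℝ) ≠ 0 := norm_ne_zero_iff.mpr hz
    set c : ℂ := z / (‖z‖ : ℂ) with hcdef
    have hkey : E1.form (c • f) g - E2.form (c • f) g = conj c * z := by
      rw [form_smul_left, form_smul_left]; ring
    have hcq : q E1 (c • f) = q E1 f := by
      have habs1 : ‖c‖ = 1 := by
        rw [hcdef, norm_div, Complex.norm_real, norm_norm,
          div_self habsz]
      have h1 : ‖((c • f : D) : H)‖ ^ 2 = ‖(f : H)‖ ^ 2 := by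
        have : ((c • f : D) : H) = c • (f : H) := rfl
        rw [this, norm_smul, habs1, one_mul]
      have h2 : E1.form (c • f) (c • f) = E1.form f f := by
        rw [form_smul_left, (E1.linear_right _).map_smul, smul_eq_mul]
        have : conj c * (c * E1.form f f) = (conj c * c) * E1.form f f := by ring
        rw [this, mul_comm (conj c) c, Complex.mul_conj, Complex.normSq_eq_norm_sq, habs1]
        norm_num
      unfold q; rw [h1, h2]
    have hcre : (conj c * z).re = ‖z‖ := by
      have : conj c * z = ((‖z‖ : ℝ) : ℂ) := by
        rw [hcdef, map_div₀, Complex.conj_ofReal, div_mul_eq_mul_div, mul_comm,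
          Complex.mul_conj, Complex.normSq_eq_norm_sq]
        push_cast
        rw [pow_two, mul_div_assoc, div_self (by exact_mod_cast habsz), mul_one]
      rw [this, Complex.ofReal_re]
    calc ‖z‖ = (conj c * z).re := hcre.symm
      _ = (E1.form (c • f) g - E2.form (c • f) g).re := by rw [hkey]
      _ ≤ δ / 2 * (q E1 (c • f) + q E1 g) := hre (c • f) g
      _ = δ / 2 * (q E1 f + q E1 g) := by rw [hcq]

end KatoAux

namespace KatoAux

variable {H : Type*} [NormedAddCommGroup H] [InnerProductSpace ℂ H] [CompleteSpace H]
  {D : Submodule ℂ H}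

lemma q_smul_real (E : EnergyFormOn H D) (t : ℝ) (f : D) :
    q E (((t : ℂ)) • f) = t ^ 2 * q E f := by
  have h1 : ‖(((t : ℂ) • f : D) : H)‖ ^ 2 = t ^ 2 * ‖(f : H)‖ ^ 2 := by
    have : (((t : ℂ) • f : D) : H) = (t : ℂ) • (f : H) := rfl
    rw [this, norm_smul, Complex.norm_real, Real.norm_eq_abs, mul_pow, sq_abs]
  have h2 : E.form ((t : ℂ) • f) ((t : ℂ) • f) = ((t ^ 2 : ℝ) : ℂ) * E.form f f := by
    rw [form_smul_left, (E.linear_right _).map_smul, smul_eq_mul, Complex.conj_ofReal]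
    push_cast; ring
  unfold q
  rw [h1, h2]
  have : (((t ^ 2 : ℝ) : ℂ) * E.form f f).re = t ^ 2 * (E.form f f).re := by
    simp [Complex.mul_re, ← Complex.ofReal_pow]
  rw [this]; ring

lemma form_diff_smul_real (E1 E2 : EnergyFormOn H D) (t s : ℝ) (f g : D) :
    E1.form ((t : ℂ) • f) ((s : ℂ) • g) - E2.form ((t : ℂ) • f) ((s : ℂ) • g)
      = ((t * s : ℝ) : ℂ) * (E1.form f g - E2.form f g) := by
  rw [form_smul_left, form_smul_left, (E1.linear_right _).map_smul,
    (E2.linear_right _).map_smul, smul_eq_mul, smul_eq_mul, Complex.conj_ofReal]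
  push_cast; ring

lemma polar_prod (E1 E2 : EnergyFormOn H D) {δ : ℝ} (hδ : 0 ≤ δ)
    (h : ∀ f : D, ‖E1.form f f - E2.form f f‖ ≤ δ * q E1 f) (f g : D)
    {a b : ℝ} (ha0 : 0 ≤ a) (hb0 : 0 ≤ b) (ha : q E1 f ≤ a ^ 2) (hb : q E1 g ≤ b ^ 2) :
    ‖E1.form f g - E2.form f g‖ ≤ δ * a * b := by
  -- degenerate cases
  rcases eq_or_lt_of_le ha0 with ha' | ha'
  · -- a = 0, so q E1 f = 0, so f = 0
    have hq0 : q E1 f ≤ 0 := by rw [← ha'] at ha; simpa using ha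
    have hf0 : ‖(f : H)‖ ^ 2 ≤ 0 := by
      have h2 := E1.nonneg f
      unfold q at hq0; linarith
    have : (f : H) = 0 := by
      have : ‖(f : H)‖ = 0 := by nlinarith [norm_nonneg (f : H)]
      simpa using this
    have hf : f = 0 := by exact_mod_cast Subtype.ext this
    rw [hf, form_zero_left, form_zero_left]
    simp [← ha']
  rcases eq_or_lt_of_le hb0 with hb' | hb'
  · have hq0 : q E1 g ≤ 0 := by rw [← hb'] at hb; simpa using hb
    have hf0 : ‖(g : H)‖ ^ 2 ≤ 0 := by
      have h2 := E1.nonneg g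
      unfold q at hq0; linarith
    have : (g : H) = 0 := by
      have : ‖(g : H)‖ = 0 := by nlinarith [norm_nonneg (g : H)]
      simpa using this
    have hg : g = 0 := by exact_mod_cast Subtype.ext this
    have z1 : E1.form f 0 = 0 := (E1.linear_right f).map_zero
    have z2 : E2.form f 0 = 0 := (E2.linear_right f).map_zero
    rw [hg, z1, z2]
    simp [← hb']
  · -- main case: a, b > 0
    set t : ℝ := Real.sqrt (b / a) with htdef
    have ht : 0 < t := Real.sqrt_pos.2 (div_pos hb' ha')
    have ht2 : t ^ 2 = b / a := Real.sq_sqrt (le_of_lt (div_pos hb' ha'))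
    have hti : t⁻¹ ^ 2 = a / b := by
      rw [inv_pow, ht2]; rw [inv_div]
    have hscale : E1.form f g - E2.form f g
        = E1.form ((t : ℂ) • f) (((t⁻¹ : ℝ) : ℂ) • g)
          - E2.form ((t : ℂ) • f) (((t⁻¹ : ℝ) : ℂ) • g) := by
      rw [form_diff_smul_real, mul_inv_cancel₀ (ne_of_gt ht)]
      simp
    rw [hscale]
    have := polar E1 E2 hδ h ((t : ℂ) • f) (((t⁻¹ : ℝ) : ℂ) • g)
    rw [q_smul_real, q_smul_real, ht2, hti] at this
    refine this.trans ?_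
    have hba : (0:ℝ) ≤ b / a := le_of_lt (div_pos hb' ha')
    have hab : (0:ℝ) ≤ a / b := le_of_lt (div_pos ha' hb')
    have e1 : b / a * q E1 f ≤ b / a * a ^ 2 := mul_le_mul_of_nonneg_left ha hba
    have e2 : a / b * q E1 g ≤ a / b * b ^ 2 := mul_le_mul_of_nonneg_left hb hab
    have e3 : b / a * a ^ 2 = a * b := by field_simp
    have e4 : a / b * b ^ 2 = a * b := by field_simp
    have e5 : b / a * q E1 f + a / b * q E1 g ≤ 2 * (a * b) := by linarith
    have e6 : δ / 2 * (b / a * q E1 f + a / b * q E1 g) ≤ δ / 2 * (2 * (a * b)) :=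
      mul_le_mul_of_nonneg_left e5 (by linarith)
    linarith

end KatoAux

namespace KatoAux

open scoped InnerProductSpace

variable {H : Type*} [NormedAddCommGroup H] [InnerProductSpace ℂ H] [CompleteSpace H]
  {D : Submodule ℂ H}

lemma enorm_sq (E : EnergyFormOn H D) (f : D) : E.enorm f ^ 2 = q E f :=
  Real.sq_sqrt (q_nonneg E f)

lemma formA (E : EnergyFormOn H D) (S : NonnegOp H) (hS : IsAssociatedOp E S) (u : H)
    (g : D) :
    E.form ⟨S.res u, hS.le (S.res_mem u)⟩ g + (inner ℂ (S.res u) (g : H) : ℂ)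
      = (inner ℂ u (g : H) : ℂ) := by
  rw [hS.compat ⟨S.res u, S.res_mem u⟩ g, ← inner_add_left, S.op_res u]

lemma res_bound (E : EnergyFormOn H D) (S : NonnegOp H) (hS : IsAssociatedOp E S) (u : H) :
    q E ⟨S.res u, hS.le (S.res_mem u)⟩ ≤ ‖u‖ ^ 2 := by
  set f : D := ⟨S.res u, hS.le (S.res_mem u)⟩ with hf
  have h1 := formA E S hS u f
  have h2 : (E.form f f).re + ‖S.res u‖ ^ 2 = (inner ℂ u (S.res u) : ℂ).re := by
    have := congrArg Complex.re h1
    rw [Complex.add_re] at this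
    have hself : ((inner ℂ (S.res u) ((f : D) : H) : ℂ)).re = ‖S.res u‖ ^ 2 := by
      have : ((f : D) : H) = S.res u := rfl
      rw [this]
      exact inner_self_eq_norm_sq (𝕜 := ℂ) (S.res u)
    rw [hself] at this
    exact this
  have h3 : (inner ℂ u (S.res u) : ℂ).re ≤ ‖u‖ * ‖S.res u‖ := re_inner_le_norm (𝕜 := ℂ) u _
  have h4 : 0 ≤ (E.form f f).re := E.nonneg f
  have h5 : 0 ≤ ‖S.res u‖ := norm_nonneg _
  have h6 : 0 ≤ ‖u‖ := norm_nonneg _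
  have hnorm : ‖((f : D) : H)‖ = ‖S.res u‖ := rfl
  unfold q
  rw [hnorm]
  nlinarith [sq_nonneg (‖u‖ - ‖S.res u‖)]

lemma res_symm (E : EnergyFormOn H D) (S : NonnegOp H) (hS : IsAssociatedOp E S)
    (u v : H) : (inner ℂ (S.res v) u : ℂ) = inner ℂ v (S.res u) := by
  have h1 := formA E S hS u ⟨S.res v, hS.le (S.res_mem v)⟩
  have h2 := formA E S hS v ⟨S.res u, hS.le (S.res_mem u)⟩
  have h1c := congrArg (starRingEnd ℂ) h1
  rw [map_add, inner_conj_symm, inner_conj_symm,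
    ← E.conj_symm ⟨S.res u, hS.le (S.res_mem u)⟩ ⟨S.res v, hS.le (S.res_mem v)⟩] at h1c
  -- h1c : E.form ⟨S.res v,_⟩ ⟨S.res u,_⟩ + inner ℂ (S.res v) (S.res u) = inner ℂ (S.res v) u
  -- h2  : E.form ⟨S.res v,_⟩ ⟨S.res u,_⟩ + inner ℂ (S.res v) (S.res u) = inner ℂ v (S.res u)
  rw [← h1c, ← h2]

lemma key_identity (Efm Einf : EnergyFormOn H D) (Tm Tinf : NonnegOp H)
    (hm : IsAssociatedOp Efm Tm) (hinf : IsAssociatedOp Einf Tinf) (u v : H) :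
    (inner ℂ v (Tm.res u - Tinf.res u) : ℂ)
      = Einf.form ⟨Tinf.res v, hinf.le (Tinf.res_mem v)⟩ ⟨Tm.res u, hm.le (Tm.res_mem u)⟩
        - Efm.form ⟨Tinf.res v, hinf.le (Tinf.res_mem v)⟩ ⟨Tm.res u, hm.le (Tm.res_mem u)⟩ := by
  have c1 := formA Einf Tinf hinf v ⟨Tm.res u, hm.le (Tm.res_mem u)⟩
  have c2 := formA Efm Tm hm u ⟨Tinf.res v, hinf.le (Tinf.res_mem v)⟩
  have c2c := congrArg (starRingEnd ℂ) c2
  rw [map_add, inner_conj_symm, inner_conj_symm,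
    ← Efm.conj_symm ⟨Tm.res u, hm.le (Tm.res_mem u)⟩
      ⟨Tinf.res v, hinf.le (Tinf.res_mem v)⟩] at c2c
  have c3 := res_symm Einf Tinf hinf u v
  have hred : ∀ (x : H) (hx : x ∈ D), (((⟨x, hx⟩ : D) : H)) = x := fun _ _ => rfl
  simp only [hred] at c1 c2c
  rw [inner_sub_right]
  linear_combination c2c + c3 - c1

end KatoAux

/-- Quantitative Kato-type convergence.  Let `{e_m}` and `e_∞` be
energy forms in the same Hilbert space `H` with common form domain `D`, and let
`Δ_m = T m`, `Δ_∞ = Tinf` be the associated non-negative self-adjoint operators.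
If `|e_∞(f,f) − e_m(f,f)| ≤ δ̂_m ‖f‖_{e_∞}²` on the common domain with `0 ≤ δ̂_m < 1`,
then `‖(Δ_m+1)⁻¹ − (Δ_∞+1)⁻¹‖ ≤ 4 δ̂_m / √(1−δ̂_m)`; in particular, if `δ̂_m → 0`
then `Δ_m → Δ_∞` in norm resolvent sense. -/
theorem kato_norm_resolvent_convergence
    {H : Type*} [NormedAddCommGroup H] [InnerProductSpace ℂ H] [CompleteSpace H]
    {D : Submodule ℂ H}
    (Em : ℕ → EnergyFormOn H D) (Einf : EnergyFormOn H D)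
    (T : ℕ → NonnegOp H) (Tinf : NonnegOp H)
    (hT : ∀ m, IsAssociatedOp (Em m) (T m)) (hTinf : IsAssociatedOp Einf Tinf)
    (δh : ℕ → ℝ) (hδ0 : ∀ m, 0 ≤ δh m) (hδ1 : ∀ m, δh m < 1)
    (h : ∀ m, ∀ f : D,
      ‖Einf.form f f - (Em m).form f f‖ ≤ δh m * Einf.enorm f ^ 2) :
    (∀ m, ‖(T m).res - Tinf.res‖ ≤ 4 * δh m / Real.sqrt (1 - δh m)) ∧
      (Filter.Tendsto δh Filter.atTop (nhds 0) →
        Filter.Tendsto (fun m => ‖(T m).res - Tinf.res‖) Filter.atTop (nhds 0)) := by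
  have main : ∀ m, ‖(T m).res - Tinf.res‖ ≤ 4 * δh m / Real.sqrt (1 - δh m) := by
    intro m
    have h1m : (0 : ℝ) < 1 - δh m := by linarith [hδ1 m]
    have hs : 0 < Real.sqrt (1 - δh m) := Real.sqrt_pos.2 h1m
    have hq : ∀ f : D, ‖Einf.form f f - (Em m).form f f‖
        ≤ δh m * KatoAux.q Einf f := by
      intro f
      have hf := h m f
      rwa [KatoAux.enorm_sq] at hf
    have hb : ‖(T m).res - Tinf.res‖ ≤ δh m / Real.sqrt (1 - δh m) := by
      refine ContinuousLinearMap.opNorm_le_bound _ (div_nonneg (hδ0 m) hs.le) (fun u => ?_)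
      set v : H := ((T m).res - Tinf.res) u with hv
      set fv : D := ⟨Tinf.res v, hTinf.le (Tinf.res_mem v)⟩ with hfv
      set gu : D := ⟨(T m).res u, (hT m).le ((T m).res_mem u)⟩ with hgu
      have qfv : KatoAux.q Einf fv ≤ ‖v‖ ^ 2 := KatoAux.res_bound Einf Tinf hTinf v
      have qgum : KatoAux.q (Em m) gu ≤ ‖u‖ ^ 2 := KatoAux.res_bound (Em m) (T m) (hT m) u
      have qgu : KatoAux.q Einf gu ≤ (‖u‖ / Real.sqrt (1 - δh m)) ^ 2 := by
        have hd := hq gu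
        have hre : (Einf.form gu gu - (Em m).form gu gu).re
            ≤ δh m * KatoAux.q Einf gu := (Complex.re_le_norm _).trans hd
        rw [Complex.sub_re] at hre
        have hstep : (1 - δh m) * KatoAux.q Einf gu ≤ ‖u‖ ^ 2 := by
          unfold KatoAux.q at *
          nlinarith
        rw [div_pow, Real.sq_sqrt h1m.le, le_div_iff₀ h1m]
        linarith [hstep, mul_comm (KatoAux.q Einf gu) (1 - δh m)]
      have hkey := KatoAux.key_identity (Em m) Einf (T m) Tinf (hT m) hTinf u v
      have hprod := KatoAux.polar_prod Einf (Em m) (hδ0 m) hq fv gu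
        (norm_nonneg v) (by positivity) qfv qgu
      have hveq : (T m).res u - Tinf.res u = v := by
        rw [hv]; simp [ContinuousLinearMap.sub_apply]
      have hv2 : ‖v‖ ^ 2 ≤ δh m * ‖v‖ * (‖u‖ / Real.sqrt (1 - δh m)) := by
        calc ‖v‖ ^ 2 = (inner ℂ v v : ℂ).re := (inner_self_eq_norm_sq (𝕜 := ℂ) v).symm
          _ = (inner ℂ v ((T m).res u - Tinf.res u) : ℂ).re := by rw [hveq]
          _ ≤ ‖(inner ℂ v ((T m).res u - Tinf.res u) : ℂ)‖ := Complex.re_le_norm _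
          _ = ‖Einf.form fv gu - (Em m).form fv gu‖ := by rw [hkey]
          _ ≤ δh m * ‖v‖ * (‖u‖ / Real.sqrt (1 - δh m)) := hprod
      show ‖v‖ ≤ δh m / Real.sqrt (1 - δh m) * ‖u‖
      by_cases hv0 : ‖v‖ = 0
      · rw [hv0]
        exact mul_nonneg (div_nonneg (hδ0 m) hs.le) (norm_nonneg u)
      · have hvpos : 0 < ‖v‖ := lt_of_le_of_ne (norm_nonneg v) (Ne.symm hv0)
        have : ‖v‖ * ‖v‖ ≤ (δh m / Real.sqrt (1 - δh m) * ‖u‖) * ‖v‖ := by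
          have : δh m * ‖v‖ * (‖u‖ / Real.sqrt (1 - δh m))
              = (δh m / Real.sqrt (1 - δh m) * ‖u‖) * ‖v‖ := by ring
          nlinarith [hv2]
        exact le_of_mul_le_mul_right this hvpos
    refine hb.trans ?_
    gcongr
    linarith [hδ0 m]
  refine ⟨main, fun hlim => ?_⟩
  have hnum : Filter.Tendsto (fun m => 4 * δh m) Filter.atTop (nhds 0) := by
    simpa using hlim.const_mul 4
  have hden : Filter.Tendsto (fun m => Real.sqrt (1 - δh m)) Filter.atTop (nhds 1) := by
    have h1 : Filter.Tendsto (fun m => 1 - δh m) Filter.atTop (nhds 1) := by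
      simpa using (tendsto_const_nhds.sub hlim)
    have h2 := (Real.continuous_sqrt.tendsto 1).comp h1
    rw [Real.sqrt_one] at h2
    exact h2
  have hg : Filter.Tendsto (fun m => 4 * δh m / Real.sqrt (1 - δh m))
      Filter.atTop (nhds 0) := by
    have := hnum.div hden one_ne_zero
    rw [zero_div] at this
    exact this
  exact squeeze_zero (fun m => norm_nonneg _) main hg

end
end

section
/- Transitivity of quasi-unitary equivalence for energy forms: let δ, δ̃ ∈ [0,1]. Suppose e and ẽ are δ-quasi-unitarily equivalent with identification operators J, J', J¹, J'¹, that ẽ and ê are δ̃-quasi-unitarily equivalent with identification operators J̃, J̃', J̃¹, J̃'¹, and that in addition ‖J¹f‖_ẽ ≤ (1+δ)‖f‖_e for all f ∈ H¹ and ‖J̃'¹w‖_ẽ ≤ (1+δ̃)‖w‖_ê for all w ∈ Ĥ¹. Then e and ê are 14(δ+δ̃)-quasi-unitarily equivalent with identification operators Ĵ := J̃∘J, Ĵ¹ := J̃¹∘J¹, Ĵ' := J'∘J̃', Ĵ'¹ := J'¹∘J̃'¹. -/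
open scoped ComplexConjugate

noncomputable section

/-- The "adjoint" identification operator is almost bounded. -/
private lemma que_adj_bound {H H' : Type*} [NormedAddCommGroup H] [InnerProductSpace ℂ H]
    [NormedAddCommGroup H'] [InnerProductSpace ℂ H']
    (δ : ℝ) (hδ : 0 ≤ δ) (J : H →L[ℂ] H') (J' : H' →L[ℂ] H)
    (hb : ∀ f : H, ‖J f‖ ≤ (1 + δ) * ‖f‖)
    (ha : ∀ (f : H) (u : H'),
      ‖(inner ℂ (J f) u : ℂ) - (inner ℂ f (J' u) : ℂ)‖ ≤ δ * ‖f‖ * ‖u‖)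
    (u : H') : ‖J' u‖ ≤ (1 + 2*δ) * ‖u‖ := by
  have h := ha (J' u) u
  set A : ℂ := inner ℂ (J' u) (J' u) with hA
  set B : ℂ := inner ℂ (J (J' u)) u with hB
  have hsq : ‖A‖ = ‖J' u‖^2 := by
    rw [hA, inner_self_eq_norm_sq_to_K]
    simp [abs_of_nonneg (norm_nonneg _)]
  have h2 : ‖B‖ ≤ (1+δ) * ‖J' u‖ * ‖u‖ := by
    calc ‖B‖ ≤ ‖J (J' u)‖ * ‖u‖ := by
          exact norm_inner_le_norm (𝕜 := ℂ) (J (J' u)) u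
      _ ≤ (1+δ) * ‖J' u‖ * ‖u‖ := by
          have := hb (J' u); nlinarith [norm_nonneg u]
  have htri : ‖A‖ ≤ ‖B - A‖ + ‖B‖ := by
    have : A = -(B - A) + B := by ring
    calc ‖A‖ = ‖-(B - A) + B‖ := by rw [← this]
      _ ≤ ‖-(B - A)‖ + ‖B‖ := norm_add_le _ _
      _ = ‖B - A‖ + ‖B‖ := by rw [norm_neg]
  have h3 : ‖J' u‖^2 ≤ (1 + 2*δ) * ‖J' u‖ * ‖u‖ := by
    rw [← hsq]; nlinarith
  by_contra hc
  push_neg at hc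
  have hpos : 0 < ‖J' u‖ := lt_of_le_of_lt (by positivity) hc
  nlinarith [mul_lt_mul_of_pos_right hc hpos]

set_option maxHeartbeats 1600000 in
/-- Transitivity of quasi-unitary equivalence for energy forms,
[Post, Prp. 4.4.16] with improved constant.  Let `δ, δ̃ ∈ [0,1]`.  If `e` and `ẽ` are
`δ`-quasi-unitarily equivalent with identification operators `J, J', J¹, J'¹`, if `ẽ`
and `ê` are `δ̃`-quasi-unitarily equivalent with identification operators
`J̃, J̃', J̃¹, J̃'¹`, and if in addition `‖J¹f‖_ẽ ≤ (1+δ)‖f‖_e` and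
`‖J̃'¹w‖_ẽ ≤ (1+δ̃)‖w‖_ê`, then `e` and `ê` are `14(δ+δ̃)`-quasi-unitarily equivalent
with identification operators `Ĵ = J̃∘J`, `Ĵ¹ = J̃¹∘J¹`, `Ĵ' = J'∘J̃'`,
`Ĵ'¹ = J'¹∘J̃'¹`. -/
theorem formQUE_trans
    {H H' H'' : Type*}
    [NormedAddCommGroup H] [InnerProductSpace ℂ H] [CompleteSpace H]
    [NormedAddCommGroup H'] [InnerProductSpace ℂ H'] [CompleteSpace H']
    [NormedAddCommGroup H''] [InnerProductSpace ℂ H''] [CompleteSpace H'']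
    {D : Submodule ℂ H} {D' : Submodule ℂ H'} {D'' : Submodule ℂ H''}
    (E : EnergyFormOn H D) (E' : EnergyFormOn H' D') (E'' : EnergyFormOn H'' D'')
    (δ δt : ℝ) (hδ0 : 0 ≤ δ) (hδ1 : δ ≤ 1) (hδt0 : 0 ≤ δt) (hδt1 : δt ≤ 1)
    (J : H →L[ℂ] H') (J' : H' →L[ℂ] H) (J1 : D →ₗ[ℂ] D') (J1' : D' →ₗ[ℂ] D)
    (Jt : H' →L[ℂ] H'') (Jt' : H'' →L[ℂ] H') (Jt1 : D' →ₗ[ℂ] D'') (Jt1' : D'' →ₗ[ℂ] D')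
    (h1 : FormQUE E E' δ J J' J1 J1')
    (h2 : FormQUE E' E'' δt Jt Jt' Jt1 Jt1')
    (hJ1 : ∀ f : D, E'.enorm (J1 f) ≤ (1 + δ) * E.enorm f)
    (hJt1' : ∀ w : D'', E'.enorm (Jt1' w) ≤ (1 + δt) * E''.enorm w) :
    FormQUE E E'' (14 * (δ + δt)) (Jt.comp J) (J'.comp Jt')
      (Jt1.comp J1) (J1'.comp Jt1') := by
  have hJ'b : ∀ u : H', ‖J' u‖ ≤ (1 + 2*δ) * ‖u‖ :=
    que_adj_bound δ hδ0 J J' h1.bounded h1.almost_adjoint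
  have hJt'b : ∀ w : H'', ‖Jt' w‖ ≤ (1 + 2*δt) * ‖w‖ :=
    que_adj_bound δt hδt0 Jt Jt' h2.bounded h2.almost_adjoint
  have heE : ∀ f : D, 0 ≤ E.enorm f := fun f => Real.sqrt_nonneg _
  have heE' : ∀ u : D', 0 ≤ E'.enorm u := fun u => Real.sqrt_nonneg _
  have heE'' : ∀ w : D'', 0 ≤ E''.enorm w := fun w => Real.sqrt_nonneg _
  constructor
  · -- bounded
    intro f
    simp only [ContinuousLinearMap.comp_apply]
    have b1 := h1.bounded f
    have b2 := h2.bounded (J f)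
    have := norm_nonneg f
    have := norm_nonneg (J f)
    nlinarith [mul_nonneg hδ0 hδt0, mul_nonneg (mul_nonneg hδ0 hδt0) (norm_nonneg f)]
  · -- almost adjoint
    intro f w
    simp only [ContinuousLinearMap.comp_apply]
    set A : ℂ := inner ℂ (Jt (J f)) w with hA
    set B : ℂ := inner ℂ (J f) (Jt' w) with hB
    set C : ℂ := inner ℂ f (J' (Jt' w)) with hC
    have tri : ‖A - C‖ ≤ ‖A - B‖ + ‖B - C‖ := by
      have hid : A - C = (A - B) + (B - C) := by ring
      rw [hid]; exact norm_add_le _ _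
    have t1 : ‖A - B‖ ≤ δt * ((1+δ) * ‖f‖) * ‖w‖ := by
      refine (h2.almost_adjoint (J f) w).trans ?_
      have := h1.bounded f
      gcongr
    have t2 : ‖B - C‖ ≤ δ * ‖f‖ * ((1 + 2*δt) * ‖w‖) := by
      refine (h1.almost_adjoint f (Jt' w)).trans ?_
      have := hJt'b w
      gcongr
    have hX : 0 ≤ ‖f‖ * ‖w‖ := mul_nonneg (norm_nonneg f) (norm_nonneg w)
    have hco : δt * (1+δ) + δ * (1 + 2*δt) ≤ 14 * (δ + δt) := by nlinarith
    nlinarith [mul_le_mul_of_nonneg_right hco hX]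
  · -- inv_left
    intro f
    simp only [ContinuousLinearMap.comp_apply]
    set e := E.enorm f with he
    set u1 : H' := ((J1 f : D') : H') with hu1
    set X : H' := (J f - u1) + ((u1 - Jt' (Jt u1)) + Jt' (Jt (u1 - J f))) with hX
    have key : (f : H) - J' (Jt' (Jt (J (f : H)))) = ((f : H) - J' (J (f : H))) + J' X := by
      rw [hX]; simp only [map_sub, map_add]; abel
    have c1 : ‖J (f : H) - u1‖ ≤ δ * e := by
      rw [norm_sub_rev]; exact h1.compat_left f
    have c2 : ‖u1 - Jt' (Jt u1)‖ ≤ δt * ((1+δ) * e) := by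
      refine (h2.inv_left (J1 f)).trans ?_
      have := hJ1 f
      gcongr
    have c3 : ‖Jt' (Jt (u1 - J (f : H)))‖ ≤ (1 + 2*δt) * ((1 + δt) * (δ * e)) := by
      refine (hJt'b _).trans ?_
      gcongr
      refine (h2.bounded _).trans ?_
      gcongr
      exact h1.compat_left f
    have hXn : ‖X‖ ≤ δ * e + (δt * ((1+δ) * e) + (1 + 2*δt) * ((1 + δt) * (δ * e))) := by
      rw [hX]
      refine (norm_add_le _ _).trans ?_
      gcongr
      refine (norm_add_le _ _).trans ?_
      gcongr
    have hJ'X : ‖J' X‖ ≤ (1 + 2*δ) * (δ * e + (δt * ((1+δ) * e) + (1 + 2*δt) * ((1 + δt) * (δ * e)))) := by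
      refine (hJ'b X).trans ?_
      gcongr
    have hco : δ + (1 + 2*δ) * (δ + (δt * (1+δ) + (1 + 2*δt) * ((1 + δt) * δ))) ≤ 14 * (δ + δt) := by
      nlinarith [mul_nonneg hδ0 hδt0, mul_nonneg (mul_nonneg hδ0 hδt0) hδt0,
        mul_nonneg (mul_nonneg hδ0 hδ0) hδt0, mul_nonneg (mul_nonneg (mul_nonneg hδ0 hδ0) hδt0) hδt0,
        mul_nonneg hδ0 hδ0]
    have hee : 0 ≤ e := heE f
    calc ‖(f : H) - J' (Jt' (Jt (J (f : H))))‖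
        ≤ ‖(f : H) - J' (J (f : H))‖ + ‖J' X‖ := by rw [key]; exact norm_add_le _ _
      _ ≤ δ * e + (1 + 2*δ) * (δ * e + (δt * ((1+δ) * e) + (1 + 2*δt) * ((1 + δt) * (δ * e)))) := by
          gcongr; exact h1.inv_left f
      _ ≤ 14 * (δ + δt) * e := by nlinarith [mul_le_mul_of_nonneg_right hco hee]
  · -- inv_right
    intro w
    simp only [ContinuousLinearMap.comp_apply]
    set e := E''.enorm w with he
    set v1 : H' := ((Jt1' w : D') : H') with hv1
    set X : H' := (Jt' (w : H'') - v1) + ((v1 - J (J' v1)) + J (J' (v1 - Jt' (w : H'')))) with hX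
    have key : (w : H'') - Jt (J (J' (Jt' (w : H'')))) = ((w : H'') - Jt (Jt' (w : H''))) + Jt X := by
      rw [hX]; simp only [map_sub, map_add]; abel
    have c1 : ‖Jt' (w : H'') - v1‖ ≤ δt * e := by
      rw [norm_sub_rev]; exact h2.compat_right w
    have c2 : ‖v1 - J (J' v1)‖ ≤ δ * ((1+δt) * e) := by
      refine (h1.inv_right (Jt1' w)).trans ?_
      have := hJt1' w
      gcongr
    have c3 : ‖J (J' (v1 - Jt' (w : H'')))‖ ≤ (1 + δ) * ((1 + 2*δ) * (δt * e)) := by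
      refine (h1.bounded _).trans ?_
      gcongr
      refine (hJ'b _).trans ?_
      gcongr
      exact h2.compat_right w
    have hXn : ‖X‖ ≤ δt * e + (δ * ((1+δt) * e) + (1 + δ) * ((1 + 2*δ) * (δt * e))) := by
      rw [hX]
      refine (norm_add_le _ _).trans ?_
      gcongr
      refine (norm_add_le _ _).trans ?_
      gcongr
    have hJtX : ‖Jt X‖ ≤ (1 + δt) * (δt * e + (δ * ((1+δt) * e) + (1 + δ) * ((1 + 2*δ) * (δt * e)))) := by
      refine (h2.bounded X).trans ?_
      gcongr
    have hco : δt + (1 + δt) * (δt + (δ * (1+δt) + (1 + δ) * ((1 + 2*δ) * δt))) ≤ 14 * (δ + δt) := by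
      nlinarith [mul_nonneg hδ0 hδt0, mul_nonneg (mul_nonneg hδ0 hδt0) hδt0,
        mul_nonneg (mul_nonneg hδ0 hδ0) hδt0, mul_nonneg (mul_nonneg (mul_nonneg hδ0 hδ0) hδt0) hδt0,
        mul_nonneg hδt0 hδt0]
    have hee : 0 ≤ e := heE'' w
    calc ‖(w : H'') - Jt (J (J' (Jt' (w : H''))))‖
        ≤ ‖(w : H'') - Jt (Jt' (w : H''))‖ + ‖Jt X‖ := by rw [key]; exact norm_add_le _ _
      _ ≤ δt * e + (1 + δt) * (δt * e + (δ * ((1+δt) * e) + (1 + δ) * ((1 + 2*δ) * (δt * e)))) := by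
          gcongr; exact h2.inv_right w
      _ ≤ 14 * (δ + δt) * e := by nlinarith [mul_le_mul_of_nonneg_right hco hee]
  · -- compat_left
    intro f
    simp only [LinearMap.comp_apply, ContinuousLinearMap.comp_apply]
    set e := E.enorm f with he
    set u1 : H' := ((J1 f : D') : H') with hu1
    have key : ((Jt1 (J1 f) : D'') : H'') - Jt (J (f : H))
        = (((Jt1 (J1 f) : D'') : H'') - Jt u1) + Jt (u1 - J (f : H)) := by
      simp only [map_sub]; abel
    have c1 : ‖((Jt1 (J1 f) : D'') : H'') - Jt u1‖ ≤ δt * ((1+δ) * e) := by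
      refine (h2.compat_left (J1 f)).trans ?_
      have := hJ1 f
      gcongr
    have c2 : ‖Jt (u1 - J (f : H))‖ ≤ (1 + δt) * (δ * e) := by
      refine (h2.bounded _).trans ?_
      gcongr
      exact h1.compat_left f
    have hco : δt * (1+δ) + (1 + δt) * δ ≤ 14 * (δ + δt) := by
      nlinarith [mul_nonneg hδ0 hδt0]
    have hee : 0 ≤ e := heE f
    calc ‖((Jt1 (J1 f) : D'') : H'') - Jt (J (f : H))‖
        ≤ ‖((Jt1 (J1 f) : D'') : H'') - Jt u1‖ + ‖Jt (u1 - J (f : H))‖ := by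
          rw [key]; exact norm_add_le _ _
      _ ≤ δt * ((1+δ) * e) + (1 + δt) * (δ * e) := by gcongr
      _ ≤ 14 * (δ + δt) * e := by nlinarith [mul_le_mul_of_nonneg_right hco hee]
  · -- compat_right
    intro w
    simp only [LinearMap.comp_apply, ContinuousLinearMap.comp_apply]
    set e := E''.enorm w with he
    set v1 : H' := ((Jt1' w : D') : H') with hv1
    have key : ((J1' (Jt1' w) : D) : H) - J' (Jt' (w : H''))
        = (((J1' (Jt1' w) : D) : H) - J' v1) + J' (v1 - Jt' (w : H'')) := by
      simp only [map_sub]; abel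
    have c1 : ‖((J1' (Jt1' w) : D) : H) - J' v1‖ ≤ δ * ((1+δt) * e) := by
      refine (h1.compat_right (Jt1' w)).trans ?_
      have := hJt1' w
      gcongr
    have c2 : ‖J' (v1 - Jt' (w : H''))‖ ≤ (1 + 2*δ) * (δt * e) := by
      refine (hJ'b _).trans ?_
      gcongr
      exact h2.compat_right w
    have hco : δ * (1+δt) + (1 + 2*δ) * δt ≤ 14 * (δ + δt) := by
      nlinarith [mul_nonneg hδ0 hδt0]
    have hee : 0 ≤ e := heE'' w
    calc ‖((J1' (Jt1' w) : D) : H) - J' (Jt' (w : H''))‖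
        ≤ ‖((J1' (Jt1' w) : D) : H) - J' v1‖ + ‖J' (v1 - Jt' (w : H''))‖ := by
          rw [key]; exact norm_add_le _ _
      _ ≤ δ * ((1+δt) * e) + (1 + 2*δ) * (δt * e) := by gcongr
      _ ≤ 14 * (δ + δt) * e := by nlinarith [mul_le_mul_of_nonneg_right hco hee]
  · -- close
    intro f w
    simp only [LinearMap.comp_apply]
    set A : ℂ := E''.form (Jt1 (J1 f)) w with hA
    set B : ℂ := E'.form (J1 f) (Jt1' w) with hB
    set C : ℂ := E.form f (J1' (Jt1' w)) with hC
    have tri : ‖A - C‖ ≤ ‖A - B‖ + ‖B - C‖ := by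
      have hid : A - C = (A - B) + (B - C) := by ring
      rw [hid]; exact norm_add_le _ _
    have t1 : ‖A - B‖ ≤ δt * ((1+δ) * E.enorm f) * E''.enorm w := by
      refine (h2.close (J1 f) w).trans ?_
      have := hJ1 f
      gcongr <;> first | exact heE'' w | exact heE f | exact mul_nonneg hδ0 (heE f) | exact mul_nonneg hδt0 (heE'' w)
    have t2 : ‖B - C‖ ≤ δ * E.enorm f * ((1+δt) * E''.enorm w) := by
      refine (h1.close f (Jt1' w)).trans ?_
      have := hJt1' w
      gcongr <;> first | exact heE'' w | exact heE f | exact mul_nonneg hδ0 (heE f) | exact mul_nonneg hδt0 (heE'' w)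
    have hX : 0 ≤ E.enorm f * E''.enorm w := mul_nonneg (heE f) (heE'' w)
    have hco : δt * (1+δ) + δ * (1+δt) ≤ 14 * (δ + δt) := by
      nlinarith [mul_nonneg hδ0 hδt0]
    nlinarith [mul_le_mul_of_nonneg_right hco hX]

end
end

section
/- Functional calculus estimate: let e in H and ẽ in H̃ be δ-quasi-unitarily equivalent energy forms with associated operators Δ, Δ̃ and identification operator J : H → H̃ (or, more generally, assume ‖(Δ̃−z)⁻¹J − J(Δ−z)⁻¹‖ ≤ 4(1 + |z+1|/d(z,S))² δ for all z ∉ S := spec Δ ∪ spec Δ̃). Let U ⊂ ℂ be an open set whose boundary ∂U is locally the graph of a Lipschitz function and satisfies ∂U ∩ S = ∅, and let η be holomorphic on U such that C_η := (1/2π) ∫_{∂U} |η(z)| · 4(1 + |z+1|/d(z,S))² |dz| < ∞. Define η(Δ) := −(1/2πi) ∮_{∂U} η(z)(Δ−z)⁻¹ dz and η(Δ̃) := −(1/2πi) ∮_{∂U} η(z)(Δ̃−z)⁻¹ dz (both integrals converging in operator norm). Then ‖η(Δ̃)J − Jη(Δ)‖ ≤ C_η δ. -/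
open scoped ComplexConjugate

noncomputable section

/-- Functional calculus estimate, [Post, Thm. 4.2.9] refined.
Assume the resolvent intertwining bound `‖(Δ̃−z)⁻¹J − J(Δ−z)⁻¹‖ ≤ 4(1+|z+1|/d(z,S))² δ`
for all `z ∉ S = spec Δ ∪ spec Δ̃` (which holds in particular if the corresponding
energy forms are `δ`-quasi-unitarily equivalent).  Let `U ⊆ ℂ` be open with boundary
`∂U` disjoint from `S`, parametrised by a differentiable curve `γ` (with derivative
`γd`), and let `η` be holomorphic on `U`.  With
`η(Δ) = −(1/2πi) ∮_{∂U} η(z)(Δ−z)⁻¹ dz` and `η(Δ̃)` defined likewise (the integrals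
converging in operator norm), and
`C_η = (1/2π) ∫_{∂U} |η(z)| · 4(1+|z+1|/d(z,S))² |dz| < ∞`, one has
`‖η(Δ̃)J − Jη(Δ)‖ ≤ C_η δ`. -/
theorem functional_calculus_estimate
    {H H' : Type*}
    [NormedAddCommGroup H] [InnerProductSpace ℂ H] [CompleteSpace H]
    [NormedAddCommGroup H'] [InnerProductSpace ℂ H'] [CompleteSpace H']
    (T : NonnegOp H) (T' : NonnegOp H') (δ : ℝ) (hδ : 0 ≤ δ) (J : H →L[ℂ] H')
    (hres : ∀ z ∉ T.spec ∪ T'.spec, ∀ (Rz : H →L[ℂ] H) (Rz' : H' →L[ℂ] H'),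
      IsResolventAt T z Rz → IsResolventAt T' z Rz' →
      ‖Rz'.comp J - J.comp Rz‖ ≤
        (4 * (1 + ‖z + 1‖ / Metric.infDist z (T.spec ∪ T'.spec)) ^ 2) * δ)
    (U : Set ℂ) (hU : IsOpen U) (hUS : frontier U ∩ (T.spec ∪ T'.spec) = ∅)
    (η : ℂ → ℂ) (hη : DifferentiableOn ℂ η U)
    (γ γd : ℝ → ℂ) (hγ : ∀ t, HasDerivAt γ (γd t) t)
    (hγrange : Set.range γ = frontier U)
    (R : ℂ → H →L[ℂ] H) (R' : ℂ → H' →L[ℂ] H')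
    (hR : ∀ z ∉ T.spec, IsResolventAt T z (R z))
    (hR' : ∀ z ∉ T'.spec, IsResolventAt T' z (R' z))
    (hint : MeasureTheory.Integrable (fun t : ℝ => (η (γ t) * γd t) • R (γ t)))
    (hint' : MeasureTheory.Integrable (fun t : ℝ => (η (γ t) * γd t) • R' (γ t)))
    (hCint : MeasureTheory.Integrable (fun t : ℝ => ‖η (γ t)‖ *
        (4 * (1 + ‖γ t + 1‖ / Metric.infDist (γ t) (T.spec ∪ T'.spec)) ^ 2) *
        ‖γd t‖))
    (Cη : ℝ)
    (hCη : Cη = (1 / (2 * Real.pi)) * ∫ t : ℝ, ‖η (γ t)‖ *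
        (4 * (1 + ‖γ t + 1‖ / Metric.infDist (γ t) (T.spec ∪ T'.spec)) ^ 2) *
        ‖γd t‖)
    (A : H →L[ℂ] H) (A' : H' →L[ℂ] H')
    (hA : A = (-(1 / (2 * (Real.pi : ℂ) * Complex.I))) •
        ∫ t : ℝ, (η (γ t) * γd t) • R (γ t))
    (hA' : A' = (-(1 / (2 * (Real.pi : ℂ) * Complex.I))) •
        ∫ t : ℝ, (η (γ t) * γd t) • R' (γ t)) :
    ‖A'.comp J - J.comp A‖ ≤ Cη * δ := by
  classical
  set S := T.spec ∪ T'.spec with hS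
  have hγS : ∀ t, γ t ∉ S := by
    intro t hmem
    have hf : γ t ∈ frontier U := by rw [← hγrange]; exact ⟨t, rfl⟩
    have : γ t ∈ frontier U ∩ S := ⟨hf, hmem⟩
    rw [hUS] at this; exact this
  have hγ1 : ∀ t, γ t ∉ T.spec := fun t h => hγS t (Or.inl h)
  have hγ2 : ∀ t, γ t ∉ T'.spec := fun t h => hγS t (Or.inr h)
  set c : ℂ := -(1 / (2 * (Real.pi : ℂ) * Complex.I)) with hc
  set b : ℝ → ℝ := fun t =>
    4 * (1 + ‖γ t + 1‖ / Metric.infDist (γ t) S) ^ 2 with hb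
  -- linear maps given by composition with J
  set L1 : (H' →L[ℂ] H') →L[ℂ] (H →L[ℂ] H') :=
    (ContinuousLinearMap.compL ℂ H H' H').flip J with hL1
  set L2 : (H →L[ℂ] H) →L[ℂ] (H →L[ℂ] H') :=
    ContinuousLinearMap.compL ℂ H H H' J with hL2
  have hL1app : ∀ B : H' →L[ℂ] H', L1 B = B.comp J := fun B => rfl
  have hL2app : ∀ B : H →L[ℂ] H, L2 B = J.comp B := fun B => rfl
  have h1' : ∀ t : ℝ, L1 ((η (γ t) * γd t) • R' (γ t)) =
      (η (γ t) * γd t) • ((R' (γ t)).comp J) := by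
    intro t; rw [map_smul]; rfl
  have h2' : ∀ t : ℝ, L2 ((η (γ t) * γd t) • R (γ t)) =
      (η (γ t) * γd t) • (J.comp (R (γ t))) := by
    intro t; rw [map_smul]; rfl
  have h1 : A'.comp J = c • ∫ t : ℝ, (η (γ t) * γd t) • ((R' (γ t)).comp J) := by
    calc A'.comp J = c • L1 (∫ t : ℝ, (η (γ t) * γd t) • R' (γ t)) := by
          rw [hA', ContinuousLinearMap.smul_comp]; rfl
      _ = c • ∫ t : ℝ, L1 ((η (γ t) * γd t) • R' (γ t)) := by
          rw [L1.integral_comp_comm hint']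
      _ = c • ∫ t : ℝ, (η (γ t) * γd t) • ((R' (γ t)).comp J) := by
          simp only [h1']
  have h2 : J.comp A = c • ∫ t : ℝ, (η (γ t) * γd t) • (J.comp (R (γ t))) := by
    calc J.comp A = c • L2 (∫ t : ℝ, (η (γ t) * γd t) • R (γ t)) := by
          rw [hA, ContinuousLinearMap.comp_smul]; rfl
      _ = c • ∫ t : ℝ, L2 ((η (γ t) * γd t) • R (γ t)) := by
          rw [L2.integral_comp_comm hint]
      _ = c • ∫ t : ℝ, (η (γ t) * γd t) • (J.comp (R (γ t))) := by
          simp only [h2']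
  have hi1 : MeasureTheory.Integrable
      (fun t : ℝ => (η (γ t) * γd t) • ((R' (γ t)).comp J)) := by
    have := L1.integrable_comp hint'
    simpa only [h1'] using this
  have hi2 : MeasureTheory.Integrable
      (fun t : ℝ => (η (γ t) * γd t) • (J.comp (R (γ t)))) := by
    have := L2.integrable_comp hint
    simpa only [h2'] using this
  have hdiff : A'.comp J - J.comp A =
      c • ∫ t : ℝ, (η (γ t) * γd t) • ((R' (γ t)).comp J - J.comp (R (γ t))) := by
    rw [h1, h2, ← smul_sub]
    congr 1
    rw [← MeasureTheory.integral_sub hi1 hi2]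
    congr 1
    ext t
    rw [smul_sub]
  have hcnorm : ‖c‖ = 1 / (2 * Real.pi) := by
    have hπ : (0 : ℝ) < Real.pi := Real.pi_pos
    rw [hc]
    rw [norm_neg, norm_div, norm_one]
    congr 1
    rw [norm_mul, norm_mul, Complex.norm_I, Complex.norm_real]
    simp [Real.norm_eq_abs, abs_of_pos hπ]
  -- pointwise bound
  have hbound : ∀ t : ℝ,
      ‖(η (γ t) * γd t) • ((R' (γ t)).comp J - J.comp (R (γ t)))‖ ≤
      ‖η (γ t)‖ * b t * ‖γd t‖ * δ := by
    intro t
    have hD : ‖(R' (γ t)).comp J - J.comp (R (γ t))‖ ≤ b t * δ :=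
      hres (γ t) (hγS t) (R (γ t)) (R' (γ t)) (hR _ (hγ1 t)) (hR' _ (hγ2 t))
    have h0 : ‖(η (γ t) * γd t) • ((R' (γ t)).comp J - J.comp (R (γ t)))‖ =
        ‖η (γ t)‖ * ‖γd t‖ *
          ‖(R' (γ t)).comp J - J.comp (R (γ t))‖ := by
      rw [norm_smul (η (γ t) * γd t) ((R' (γ t)).comp J - J.comp (R (γ t))),
        norm_mul]
    rw [h0]
    calc ‖η (γ t)‖ * ‖γd t‖ *
          ‖(R' (γ t)).comp J - J.comp (R (γ t))‖
        ≤ ‖η (γ t)‖ * ‖γd t‖ * (b t * δ) := by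
          apply mul_le_mul_of_nonneg_left hD
          positivity
      _ = ‖η (γ t)‖ * b t * ‖γd t‖ * δ := by ring
  have hgint : MeasureTheory.Integrable
      (fun t : ℝ => ‖η (γ t)‖ * b t * ‖γd t‖ * δ) :=
    hCint.mul_const δ
  have hnorm_int :
      ‖∫ t : ℝ, (η (γ t) * γd t) • ((R' (γ t)).comp J - J.comp (R (γ t)))‖ ≤
      ∫ t : ℝ, ‖η (γ t)‖ * b t * ‖γd t‖ * δ :=
    MeasureTheory.norm_integral_le_of_norm_le hgint
      (Filter.Eventually.of_forall hbound)
  have hIval : (∫ t : ℝ, ‖η (γ t)‖ * b t * ‖γd t‖ * δ) =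
      (∫ t : ℝ, ‖η (γ t)‖ * b t * ‖γd t‖) * δ :=
    MeasureTheory.integral_mul_const δ _
  rw [hdiff,
    norm_smul c (∫ t : ℝ, (η (γ t) * γd t) • ((R' (γ t)).comp J - J.comp (R (γ t)))),
    hcnorm]
  have hπ : (0 : ℝ) < Real.pi := Real.pi_pos
  have h1over : (0 : ℝ) ≤ 1 / (2 * Real.pi) := by positivity
  calc (1 / (2 * Real.pi)) *
        ‖∫ t : ℝ, (η (γ t) * γd t) • ((R' (γ t)).comp J - J.comp (R (γ t)))‖
      ≤ (1 / (2 * Real.pi)) *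
        ((∫ t : ℝ, ‖η (γ t)‖ * b t * ‖γd t‖) * δ) := by
        apply mul_le_mul_of_nonneg_left _ h1over
        rw [← hIval]; exact hnorm_int
    _ = Cη * δ := by rw [hCη]; ring

end
end
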